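/- arXiv:1502.03871 — 10 statements merged into one kernel-verified Lean document; each statement's English description precedes it below -/
import Mathlib

section
/- Fix real numbers λ > 0 and θ > 0 and a natural number i. Define φ_i : ℝ × [0,∞) → ℝ by φ_i(z,t) = (1 − (1−z)e^{−θt})^i · exp( −(λ/θ)(1−z)(1−e^{−θt}) ). Then φ_i(z,0) = z^i for all z ∈ ℝ, and for all z ∈ ℝ and t > 0 one has ∂φ_i/∂t(z,t) = θ(1−z) ∂φ_i/∂z(z,t) − λ(1−z) φ_i(z,t); that is, φ_i solves the order-book generating-function PDE ∂φ/∂t = θ(1−z)∂φ/∂z − λ(1−G(z))φ with unit-size limit orders G(z) = z and initial condition φ(z,0) = z^i. -/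
/-- In the one-sided order-book model with unit-size limit orders
arriving at rate `lam > 0` and per-share cancellation rate `th > 0`, the function
`φ_i(z,t) = (1-(1-z)e^{-θt})^i exp(-(λ/θ)(1-z)(1-e^{-θt}))` satisfies `φ_i(z,0) = z^i`
and the PDE `∂φ/∂t = θ(1-z)∂φ/∂z - λ(1-z)φ`. -/
theorem orderbook_generating_function_pde_unit_size
    (lam th : ℝ) (hlam : 0 < lam) (hth : 0 < th) (i : ℕ) :
    let φ : ℝ → ℝ → ℝ := fun z t =>
      (1 - (1 - z) * Real.exp (-th * t)) ^ i *
        Real.exp (-(lam / th) * (1 - z) * (1 - Real.exp (-th * t)))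
    (∀ z : ℝ, φ z 0 = z ^ i) ∧
      ∀ z t : ℝ, 0 < t →
        deriv (fun s => φ z s) t =
          th * (1 - z) * deriv (fun w => φ w t) z - lam * (1 - z) * φ z t := by
  intro φ
  refine ⟨fun z => by simp [φ], ?_⟩
  intro z t _
  -- time derivative pieces
  have hEt : HasDerivAt (fun s : ℝ => Real.exp (-th * s))
      (Real.exp (-th * t) * (-th * 1)) t :=
    ((hasDerivAt_id t).const_mul (-th)).exp
  have hAt := ((hEt.const_mul (1 - z)).const_sub 1).pow i
  have hBt := ((hEt.const_sub 1).const_mul (-(lam / th) * (1 - z))).exp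
  have hT := (hAt.mul hBt).deriv
  -- space derivative pieces
  have h1 : HasDerivAt (fun w : ℝ => 1 - w) (-1) z := (hasDerivAt_id z).const_sub 1
  have hAz := ((h1.mul_const (Real.exp (-th * t))).const_sub 1).pow i
  have hBz := ((h1.const_mul (-(lam / th))).mul_const (1 - Real.exp (-th * t))).exp
  have hZ := (hAz.mul hBz).deriv
  simp only [φ]
  simp only [Pi.pow_def, Pi.mul_def] at hT hZ
  rw [hT, hZ]
  have hth' : th ≠ 0 := hth.ne'
  field_simp
  ring
end

section
/- Fix real numbers λ > 0, θ > 0, a natural number i, and t ≥ 0. For j ∈ ℕ define r_{ij}(t) = Σ_{k=0}^{min(i,j)} [ i! / (k!(i−k)!(j−k)!) ] (λ/θ)^{j−k} e^{−kθt} (1−e^{−θt})^{i+j−2k} e^{−(λ/θ)(1−e^{−θt})}. Then for every z ∈ ℝ the series Σ_{j=0}^∞ r_{ij}(t) z^j converges and its sum equals (1 − (1−z)e^{−θt})^i · exp( −(λ/θ)(1−z)(1−e^{−θt}) ); i.e., the r_{ij}(t) are exactly the Taylor coefficients in z at 0 of the generating function φ_i(z,t). -/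
open Finset

/-- The explicit coefficients `r_{ij}(t)` are exactly the Taylor
coefficients of the generating function
`φ_i(z,t) = (1-(1-z)e^{-θt})^i exp(-(λ/θ)(1-z)(1-e^{-θt}))` of the transition
probabilities of the order-book queue with unit-size limit orders. -/
theorem orderbook_transition_probabilities_unit_size
    (lam th : ℝ) (hlam : 0 < lam) (hth : 0 < th) (i : ℕ) (t : ℝ) (ht : 0 ≤ t) :
    let r : ℕ → ℝ := fun j =>
      ∑ k ∈ Finset.range (min i j + 1),
        (Nat.factorial i : ℝ) /
            ((Nat.factorial k : ℝ) * (Nat.factorial (i - k) : ℝ) *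
              (Nat.factorial (j - k) : ℝ)) *
          (lam / th) ^ (j - k) * Real.exp (-(k : ℝ) * th * t) *
          (1 - Real.exp (-th * t)) ^ (i + j - 2 * k) *
          Real.exp (-(lam / th) * (1 - Real.exp (-th * t)))
    ∀ z : ℝ,
      HasSum (fun j : ℕ => r j * z ^ j)
        ((1 - (1 - z) * Real.exp (-th * t)) ^ i *
          Real.exp (-(lam / th) * (1 - z) * (1 - Real.exp (-th * t)))) := by
  intro r z
  set a : ℝ := Real.exp (-th * t) with ha
  set b : ℝ := 1 - a with hb
  set c : ℝ := lam / th with hc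
  set E : ℝ := Real.exp (-c * b) with hE
  have hexp : HasSum (fun n : ℕ => (c * b * z) ^ n / n.factorial)
      (Real.exp (c * b * z)) := by
    rw [Real.exp_eq_exp_ℝ]
    exact NormedSpace.expSeries_div_hasSum_exp (c * b * z)
  have key : ∀ k ∈ range (i + 1),
      HasSum (fun j : ℕ => if k ≤ j then
          (i.choose k : ℝ) * (a * z) ^ k * b ^ (i - k) * E *
            ((c * b * z) ^ (j - k) / (j - k).factorial) else 0)
        ((i.choose k : ℝ) * (a * z) ^ k * b ^ (i - k) * E * Real.exp (c * b * z)) := by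
    intro k _
    have h1 := hexp.mul_left ((i.choose k : ℝ) * (a * z) ^ k * b ^ (i - k) * E)
    have hinj : Function.Injective (fun n : ℕ => n + k) := fun m n h => by
      simpa using h
    refine (Function.Injective.hasSum_iff hinj ?_).mp ?_
    · intro j hj
      have hkj : ¬ k ≤ j := by
        intro hk
        exact hj ⟨j - k, by simp only []; omega⟩
      simp [hkj]
    · convert h1 using 1
      · rfl
      funext n
      simp [Nat.add_sub_cancel]
  have hsum := hasSum_sum key
  convert hsum using 1
  · funext j
    have hsub : range (min i j + 1) ⊆ range (i + 1) := by
      intro k hk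
      simp only [mem_range] at hk ⊢
      omega
    rw [show (r j * z ^ j) =
        ∑ k ∈ range (min i j + 1),
          ((Nat.factorial i : ℝ) /
              ((Nat.factorial k : ℝ) * (Nat.factorial (i - k) : ℝ) *
                (Nat.factorial (j - k) : ℝ)) *
            c ^ (j - k) * Real.exp (-(k : ℝ) * th * t) *
            b ^ (i + j - 2 * k) * E) * z ^ j from by
      simp only [r]
      rw [Finset.sum_mul]]
    rw [← Finset.sum_subset hsub]
    · refine Finset.sum_congr rfl fun k hk => ?_
      simp only [mem_range] at hk
      have hki : k ≤ i := by omega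
      have hkj : k ≤ j := by omega
      rw [if_pos hkj]
      have hak : Real.exp (-(k : ℝ) * th * t) = a ^ k := by
        rw [ha, ← Real.exp_nat_mul]
        ring_nf
      have hbk : b ^ (i + j - 2 * k) = b ^ (i - k) * b ^ (j - k) := by
        rw [← pow_add]
        congr 1
        omega
      have hzk : z ^ j = z ^ k * z ^ (j - k) := by
        rw [← pow_add]
        congr 1
        omega
      have hch : (i.choose k : ℝ) = (Nat.factorial i : ℝ) /
          ((Nat.factorial k : ℝ) * (Nat.factorial (i - k) : ℝ)) :=
        Nat.cast_choose ℝ hki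
      have hf1 : (Nat.factorial k : ℝ) ≠ 0 := Nat.cast_ne_zero.mpr k.factorial_ne_zero
      have hf2 : (Nat.factorial (i - k) : ℝ) ≠ 0 := Nat.cast_ne_zero.mpr (i - k).factorial_ne_zero
      have hf3 : (Nat.factorial (j - k) : ℝ) ≠ 0 := Nat.cast_ne_zero.mpr (j - k).factorial_ne_zero
      rw [hak, hbk, hzk, hch, mul_pow, mul_pow, mul_pow]
      simp only [div_eq_mul_inv, mul_inv]
      ring
    · intro k hk1 hk2
      simp only [mem_range] at hk1 hk2
      have hkj : ¬ k ≤ j := by omega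
      rw [if_neg hkj]
  · have hpow : (1 - (1 - z) * a) ^ i = (a * z + b) ^ i := by
      rw [hb]; ring_nf
    have hexp2 : Real.exp (-c * (1 - z) * b) = E * Real.exp (c * b * z) := by
      rw [hE, ← Real.exp_add]
      ring_nf
    rw [hpow, hexp2, add_pow]
    rw [Finset.sum_mul]
    refine Finset.sum_congr rfl fun k hk => ?_
    ring
end

section
/- Fix real numbers λ > 0, θ > 0 and a natural number i. For j ∈ ℕ and t ≥ 0 define r_{ij}(t) = Σ_{k=0}^{min(i,j)} [ i! / (k!(i−k)!(j−k)!) ] (λ/θ)^{j−k} e^{−kθt} (1−e^{−θt})^{i+j−2k} e^{−(λ/θ)(1−e^{−θt})} (and set r_{i,−1} ≡ 0). Then r_{ij}(0) = 1 if j = i and 0 otherwise, and for every t > 0 and every j ∈ ℕ the Kolmogorov forward equation holds: r'_{ij}(t) = −(λ + jθ) r_{ij}(t) + (j+1)θ r_{i,j+1}(t) + λ r_{i,j−1}(t). -/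
open Finset

noncomputable def obC (i j k : ℕ) : ℝ :=
  (Nat.factorial i : ℝ) /
    ((Nat.factorial k : ℝ) * (Nat.factorial (i - k) : ℝ) * (Nat.factorial (j - k) : ℝ))

noncomputable def obS (A u : ℝ) (i j : ℕ) : ℝ :=
  ∑ k ∈ Finset.range (min i j + 1),
    obC i j k * A ^ (j - k) * u ^ k * (1 - u) ^ (i + j - 2 * k)

noncomputable def obR (lam th : ℝ) (i : ℕ) (j : ℕ) (t : ℝ) : ℝ :=
  ∑ k ∈ Finset.range (min i j + 1),
    (Nat.factorial i : ℝ) /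
        ((Nat.factorial k : ℝ) * (Nat.factorial (i - k) : ℝ) *
          (Nat.factorial (j - k) : ℝ)) *
      (lam / th) ^ (j - k) * Real.exp (-(k : ℝ) * th * t) *
      (1 - Real.exp (-th * t)) ^ (i + j - 2 * k) *
      Real.exp (-(lam / th) * (1 - Real.exp (-th * t)))

lemma fact_ne (n : ℕ) : ((Nat.factorial n : ℝ)) ≠ 0 :=
  Nat.cast_ne_zero.2 (Nat.factorial_ne_zero n)

lemma obC_pred (i j k : ℕ) (hj : 1 ≤ j) (hk : k ≤ j - 1) :
    ((j - k : ℕ) : ℝ) * obC i j k = obC i (j - 1) k := by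
  have hfac : (Nat.factorial (j - k) : ℝ)
      = ((j - k : ℕ) : ℝ) * (Nat.factorial (j - 1 - k) : ℝ) := by
    rw [show j - k = (j - 1 - k) + 1 from by omega, Nat.factorial_succ]
    push_cast
    ring
  have hx : ((j - k : ℕ) : ℝ) ≠ 0 := Nat.cast_ne_zero.2 (by omega)
  unfold obC
  rw [hfac]
  revert hx
  generalize ((j - k : ℕ) : ℝ) = x
  intro hx
  have h1 := fact_ne k; have h2 := fact_ne (i - k); have h3 := fact_ne (j - 1 - k)
  field_simp

lemma obC_succ (i j k : ℕ) (hk : k ≤ j) :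
    ((j : ℝ) + 1) * obC i (j + 1) k = obC i j k + (k : ℝ) * obC i (j + 1) k := by
  have h : j + 1 - k = (j - k) + 1 := by omega
  unfold obC
  rw [h, Nat.factorial_succ]
  push_cast
  rw [Nat.cast_sub hk]
  have h1 := fact_ne k; have h2 := fact_ne (i - k); have h3 := fact_ne (j - k)
  have h4 : (j : ℝ) - (k : ℝ) + 1 ≠ 0 := by
    have : (k : ℝ) ≤ j := Nat.cast_le.2 hk
    intro hcon; nlinarith
  field_simp
  ring

lemma obC_shift (i j k : ℕ) (hkj : k ≤ j) (hki : k < i) :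
    ((k : ℝ) + 1) * obC i (j + 1) (k + 1) = ((i - k : ℕ) : ℝ) * obC i j k := by
  have e1 : j + 1 - (k + 1) = j - k := by omega
  have e2 : i - k = (i - (k + 1)) + 1 := by omega
  unfold obC
  rw [e1, e2, Nat.factorial_succ (i - (k + 1)), Nat.factorial_succ k]
  have h1 := fact_ne k; have h2 := fact_ne (i - (k + 1)); have h3 := fact_ne (j - k)
  have h4 : ((i - (k + 1) : ℕ) : ℝ) + 1 ≠ 0 := by positivity
  have h5 : ((k : ℕ) : ℝ) + 1 ≠ 0 := by positivity
  push_cast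
  field_simp

lemma perk (A u : ℝ) (i j k : ℕ) (hki : k ≤ i) (hkj : k ≤ j) :
    -(k : ℝ) * (1 - u) ^ (i + j - 2 * k)
      + ((i + j - 2 * k : ℕ) : ℝ) * u * (1 - u) ^ (i + j - 2 * k - 1)
      - A * u * (1 - u) ^ (i + j - 2 * k)
    = -(A + (j : ℝ)) * (1 - u) ^ (i + j - 2 * k) + A * (1 - u) ^ (i + j - 2 * k + 1)
      + ((i - k : ℕ) : ℝ) * u * (1 - u) ^ (i + j - 2 * k - 1)
      + ((j - k : ℕ) : ℝ) * (1 - u) ^ (i + j - 2 * k - 1) := by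
  rcases Nat.eq_zero_or_pos (i + j - 2 * k) with h0 | hpos
  · have hjk : j = k := by omega
    rw [h0, show i - k = 0 from by omega, show j - k = 0 from by omega, hjk]
    simp only [Nat.zero_sub, Nat.cast_zero, pow_zero, zero_add, pow_one, zero_mul,
      mul_one, add_zero]
    ring
  · obtain ⟨n, hn⟩ : ∃ n, i + j - 2 * k = n + 1 := ⟨i + j - 2 * k - 1, by omega⟩
    have h2k : 2 * k ≤ i + j := by omega
    rw [hn]
    simp only [Nat.add_sub_cancel]
    have h1 : ((i - k : ℕ) : ℝ) = (i : ℝ) - k := Nat.cast_sub hki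
    have h2 : ((j - k : ℕ) : ℝ) = (j : ℝ) - k := Nat.cast_sub hkj
    have h3 : (i : ℝ) + (j : ℝ) - 2 * (k : ℝ) = (n : ℝ) + 1 := by
      rw [show ((n : ℝ) + 1) = ((n + 1 : ℕ) : ℝ) from by push_cast; ring, ← hn,
        Nat.cast_sub h2k]
      push_cast; ring
    rw [h1, h2]
    push_cast
    simp only [pow_succ]
    linear_combination (-(u * (1 - u) ^ n)) * h3

lemma stepA (A u : ℝ) (i j : ℕ) :
    (if j = 0 then (0 : ℝ) else A * obS A u i (j - 1)) =
    ∑ k ∈ Finset.range (min i j + 1),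
      ((j - k : ℕ) : ℝ) * obC i j k * A ^ (j - k) * u ^ k * (1 - u) ^ (i + j - 2 * k - 1) := by
  rcases Nat.eq_zero_or_pos j with hj | hj
  · subst hj; simp
  · rw [if_neg (by omega)]
    unfold obS
    rw [Finset.mul_sum]
    have hterm : ∀ k, k ≤ j - 1 →
        A * (obC i (j - 1) k * A ^ (j - 1 - k) * u ^ k * (1 - u) ^ (i + (j - 1) - 2 * k))
        = ((j - k : ℕ) : ℝ) * obC i j k * A ^ (j - k) * u ^ k
            * (1 - u) ^ (i + j - 2 * k - 1) := by
      intro k hk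
      have hc := obC_pred i j k hj hk
      have hA : A ^ (j - k) = A ^ (j - 1 - k) * A := by
        rw [← pow_succ]; congr 1; omega
      rw [show i + (j - 1) - 2 * k = i + j - 2 * k - 1 from by omega, ← hc, hA]
      ring
    rcases le_or_gt i (j - 1) with h | h
    · rw [min_eq_left h, min_eq_left (by omega : i ≤ j)]
      refine Finset.sum_congr rfl fun k hk => ?_
      rw [Finset.mem_range] at hk
      exact hterm k (by omega)
    · rw [min_eq_right (by omega : j - 1 ≤ i), min_eq_right (by omega : j ≤ i),
        show j - 1 + 1 = j from by omega, Finset.sum_range_succ,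
        show ((j - j : ℕ) : ℝ) = 0 from by simp]
      simp only [zero_mul, add_zero]
      refine Finset.sum_congr rfl fun k hk => ?_
      rw [Finset.mem_range] at hk
      exact hterm k (by omega)

lemma stepB (A u : ℝ) (i j : ℕ) :
    ((j : ℝ) + 1) * obS A u i (j + 1) =
    (∑ k ∈ Finset.range (min i j + 1),
        obC i j k * (A ^ (j - k) * A) * u ^ k * (1 - u) ^ (i + j - 2 * k + 1)) +
    ∑ k ∈ Finset.range (min i j + 1),
      ((i - k : ℕ) : ℝ) * obC i j k * A ^ (j - k) * (u ^ k * u)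
        * (1 - u) ^ (i + j - 2 * k - 1) := by
  unfold obS
  rw [Finset.mul_sum]
  have key : ∀ k, k ≤ i → k ≤ j →
      ((j : ℝ) + 1) * (obC i (j + 1) k * A ^ (j + 1 - k) * u ^ k
          * (1 - u) ^ (i + (j + 1) - 2 * k))
      = obC i j k * (A ^ (j - k) * A) * u ^ k * (1 - u) ^ (i + j - 2 * k + 1)
        + (k : ℝ) * (obC i (j + 1) k * A ^ (j + 1 - k) * u ^ k
            * (1 - u) ^ (i + (j + 1) - 2 * k)) := by
    intro k hki hkj
    have hc := obC_succ i j k hkj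
    have hA : A ^ (j + 1 - k) = A ^ (j - k) * A := by rw [← pow_succ]; congr 1; omega
    rw [show i + (j + 1) - 2 * k = i + j - 2 * k + 1 from by omega, hA]
    linear_combination (A ^ (j - k) * A * u ^ k * (1 - u) ^ (i + j - 2 * k + 1)) * hc
  have shiftterm : ∀ k, k < i → k ≤ j →
      ((k + 1 : ℕ) : ℝ) * (obC i (j + 1) (k + 1) * A ^ (j + 1 - (k + 1)) * u ^ (k + 1)
          * (1 - u) ^ (i + (j + 1) - 2 * (k + 1)))
      = ((i - k : ℕ) : ℝ) * obC i j k * A ^ (j - k) * (u ^ k * u)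
          * (1 - u) ^ (i + j - 2 * k - 1) := by
    intro k hki hkj
    have hc := obC_shift i j k hkj hki
    rw [show j + 1 - (k + 1) = j - k from by omega,
      show i + (j + 1) - 2 * (k + 1) = i + j - 2 * k - 1 from by omega,
      pow_succ]
    push_cast
    linear_combination (A ^ (j - k) * (u ^ k * u) * (1 - u) ^ (i + j - 2 * k - 1)) * hc
  rcases le_or_gt i j with h | h
  · rw [show min i (j + 1) = i from by omega, show min i j = i from by omega]
    have hS : (∑ k ∈ Finset.range (i + 1),
          ((j : ℝ) + 1) * (obC i (j + 1) k * A ^ (j + 1 - k) * u ^ k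
            * (1 - u) ^ (i + (j + 1) - 2 * k)))
        = ∑ k ∈ Finset.range (i + 1),
            (obC i j k * (A ^ (j - k) * A) * u ^ k * (1 - u) ^ (i + j - 2 * k + 1)
              + (k : ℝ) * (obC i (j + 1) k * A ^ (j + 1 - k) * u ^ k
                  * (1 - u) ^ (i + (j + 1) - 2 * k))) := by
      refine Finset.sum_congr rfl fun k hk => ?_
      rw [Finset.mem_range] at hk
      exact key k (by omega) (by omega)
    rw [hS, Finset.sum_add_distrib]
    congr 1
    rw [Finset.sum_range_succ']
    simp only [Nat.cast_zero, zero_mul, add_zero]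
    rw [Finset.sum_range_succ, show ((i - i : ℕ) : ℝ) = 0 from by simp]
    simp only [zero_mul, add_zero]
    refine Finset.sum_congr rfl fun k hk => ?_
    rw [Finset.mem_range] at hk
    exact shiftterm k (by omega) (by omega)
  · rw [show min i (j + 1) = j + 1 from by omega, show min i j = j from by omega,
      Finset.sum_range_succ]
    have hS : (∑ k ∈ Finset.range (j + 1),
          ((j : ℝ) + 1) * (obC i (j + 1) k * A ^ (j + 1 - k) * u ^ k
            * (1 - u) ^ (i + (j + 1) - 2 * k)))
        = ∑ k ∈ Finset.range (j + 1),
            (obC i j k * (A ^ (j - k) * A) * u ^ k * (1 - u) ^ (i + j - 2 * k + 1)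
              + (k : ℝ) * (obC i (j + 1) k * A ^ (j + 1 - k) * u ^ k
                  * (1 - u) ^ (i + (j + 1) - 2 * k))) := by
      refine Finset.sum_congr rfl fun k hk => ?_
      rw [Finset.mem_range] at hk
      exact key k (by omega) (by omega)
    rw [hS, Finset.sum_add_distrib, add_assoc]
    congr 1
    rw [Finset.sum_range_succ']
    simp only [Nat.cast_zero, zero_mul, add_zero]
    rw [Finset.sum_range_succ]
    congr 1
    · refine Finset.sum_congr rfl fun k hk => ?_
      rw [Finset.mem_range] at hk
      exact shiftterm k (by omega) (by omega)
    · have hs := shiftterm j (by omega) le_rfl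
      push_cast at hs ⊢
      exact hs

lemma core (A u : ℝ) (i j : ℕ) :
    ∑ k ∈ Finset.range (min i j + 1),
      obC i j k * A ^ (j - k) * u ^ k *
        (-(k : ℝ) * (1 - u) ^ (i + j - 2 * k)
          + ((i + j - 2 * k : ℕ) : ℝ) * u * (1 - u) ^ (i + j - 2 * k - 1)
          - A * u * (1 - u) ^ (i + j - 2 * k))
    = -(A + (j : ℝ)) * obS A u i j + ((j : ℝ) + 1) * obS A u i (j + 1)
      + (if j = 0 then 0 else A * obS A u i (j - 1)) := by
  have hper : ∀ k ∈ Finset.range (min i j + 1),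
      obC i j k * A ^ (j - k) * u ^ k *
        (-(k : ℝ) * (1 - u) ^ (i + j - 2 * k)
          + ((i + j - 2 * k : ℕ) : ℝ) * u * (1 - u) ^ (i + j - 2 * k - 1)
          - A * u * (1 - u) ^ (i + j - 2 * k))
      = -(A + (j : ℝ)) * (obC i j k * A ^ (j - k) * u ^ k * (1 - u) ^ (i + j - 2 * k))
        + (obC i j k * (A ^ (j - k) * A) * u ^ k * (1 - u) ^ (i + j - 2 * k + 1)
          + ((i - k : ℕ) : ℝ) * obC i j k * A ^ (j - k) * (u ^ k * u)
              * (1 - u) ^ (i + j - 2 * k - 1))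
        + ((j - k : ℕ) : ℝ) * obC i j k * A ^ (j - k) * u ^ k
            * (1 - u) ^ (i + j - 2 * k - 1) := by
    intro k hk
    rw [Finset.mem_range] at hk
    have hp := perk A u i j k (by omega) (by omega)
    linear_combination (obC i j k * A ^ (j - k) * u ^ k) * hp
  rw [Finset.sum_congr rfl hper, Finset.sum_add_distrib, Finset.sum_add_distrib,
    Finset.sum_add_distrib, stepA, stepB]
  unfold obS
  rw [Finset.mul_sum]

lemma exp_pow (th t : ℝ) (k : ℕ) :
    Real.exp (-(k : ℝ) * th * t) = Real.exp (-th * t) ^ k := by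
  rw [← Real.exp_nat_mul]
  congr 1
  ring

lemma term_hasDerivAt (lam th : ℝ) (i j k : ℕ) (t : ℝ) :
    HasDerivAt (fun s => obC i j k * (lam / th) ^ (j - k) * Real.exp (-(k : ℝ) * th * s) *
        (1 - Real.exp (-th * s)) ^ (i + j - 2 * k) *
        Real.exp (-(lam / th) * (1 - Real.exp (-th * s))))
      (obC i j k * (lam / th) ^ (j - k) * Real.exp (-th * t) ^ k *
        (-(k : ℝ) * (1 - Real.exp (-th * t)) ^ (i + j - 2 * k)
          + ((i + j - 2 * k : ℕ) : ℝ) * Real.exp (-th * t)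
              * (1 - Real.exp (-th * t)) ^ (i + j - 2 * k - 1)
          - lam / th * Real.exp (-th * t) * (1 - Real.exp (-th * t)) ^ (i + j - 2 * k))
        * (th * Real.exp (-(lam / th) * (1 - Real.exp (-th * t))))) t := by
  have hu : HasDerivAt (fun s : ℝ => Real.exp (-th * s)) (Real.exp (-th * t) * -th) t := by
    have h : HasDerivAt (fun s : ℝ => -th * s) (-th) t := by
      simpa using (hasDerivAt_id t).const_mul (-th)
    exact h.exp
  have h1 : HasDerivAt (fun s : ℝ => Real.exp (-(k : ℝ) * th * s))
      (Real.exp (-(k : ℝ) * th * t) * (-(k : ℝ) * th)) t := by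
    have h : HasDerivAt (fun s : ℝ => -(k : ℝ) * th * s) (-(k : ℝ) * th) t := by
      simpa using (hasDerivAt_id t).const_mul (-(k : ℝ) * th)
    exact h.exp
  have hv : HasDerivAt (fun s : ℝ => 1 - Real.exp (-th * s))
      (0 - Real.exp (-th * t) * -th) t := (hasDerivAt_const t (1 : ℝ)).sub hu
  have h2 := hv.pow (i + j - 2 * k)
  have h3 : HasDerivAt (fun s : ℝ => Real.exp (-(lam / th) * (1 - Real.exp (-th * s))))
      (Real.exp (-(lam / th) * (1 - Real.exp (-th * t)))
        * (-(lam / th) * (0 - Real.exp (-th * t) * -th))) t :=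
    (hv.const_mul (-(lam / th))).exp
  have hprod := ((h1.const_mul (obC i j k * (lam / th) ^ (j - k))).mul h2).mul h3
  refine hprod.congr_deriv ?_
  simp only [Pi.pow_apply, Pi.mul_apply]
  rw [exp_pow]
  ring

lemma obR_hasDerivAt (lam th : ℝ) (i j : ℕ) (t : ℝ) :
    HasDerivAt (fun s => obR lam th i j s)
      ((∑ k ∈ Finset.range (min i j + 1),
          obC i j k * (lam / th) ^ (j - k) * Real.exp (-th * t) ^ k *
            (-(k : ℝ) * (1 - Real.exp (-th * t)) ^ (i + j - 2 * k)
              + ((i + j - 2 * k : ℕ) : ℝ) * Real.exp (-th * t)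
                  * (1 - Real.exp (-th * t)) ^ (i + j - 2 * k - 1)
              - lam / th * Real.exp (-th * t) * (1 - Real.exp (-th * t)) ^ (i + j - 2 * k)))
        * (th * Real.exp (-(lam / th) * (1 - Real.exp (-th * t))))) t := by
  rw [Finset.sum_mul]
  unfold obR
  exact HasDerivAt.fun_sum fun k _ => term_hasDerivAt lam th i j k t

lemma obR_eq (lam th : ℝ) (i j : ℕ) (t : ℝ) :
    obR lam th i j t = obS (lam / th) (Real.exp (-th * t)) i j *
      Real.exp (-(lam / th) * (1 - Real.exp (-th * t))) := by
  unfold obR obS obC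
  rw [Finset.sum_mul]
  refine Finset.sum_congr rfl fun k _ => ?_
  rw [exp_pow]

lemma obR_zero (lam th : ℝ) (i j : ℕ) :
    obR lam th i j 0 = if j = i then 1 else 0 := by
  unfold obR
  simp only [mul_zero, Real.exp_zero, sub_self, mul_one]
  by_cases h : j = i
  · subst h
    rw [if_pos rfl, min_self]
    rw [Finset.sum_eq_single_of_mem j (Finset.self_mem_range_succ j)]
    · rw [Nat.sub_self, show j + j - 2 * j = 0 from by omega]
      simp [fact_ne j]
    · intro k hk hkj
      rw [Finset.mem_range] at hk
      rw [zero_pow (by omega : j + j - 2 * k ≠ 0)]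
      ring
  · rw [if_neg h]
    refine Finset.sum_eq_zero fun k hk => ?_
    rw [Finset.mem_range] at hk
    rw [zero_pow (by omega : i + j - 2 * k ≠ 0)]
    ring

/-- The explicit transition probabilities `r_{ij}(t)` of the
order-book queue with unit-size limit orders (birth rate `λ`, death rate `jθ`)
satisfy `r_{ij}(0) = δ_{ij}` and the Kolmogorov forward equations
`r'_{ij}(t) = -(λ+jθ) r_{ij}(t) + (j+1)θ r_{i,j+1}(t) + λ r_{i,j-1}(t)`
(with the convention `r_{i,-1} ≡ 0`). -/
theorem orderbook_kolmogorov_forward_unit_size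
    (lam th : ℝ) (hlam : 0 < lam) (hth : 0 < th) (i : ℕ) :
    let r : ℕ → ℝ → ℝ := fun j t =>
      ∑ k ∈ Finset.range (min i j + 1),
        (Nat.factorial i : ℝ) /
            ((Nat.factorial k : ℝ) * (Nat.factorial (i - k) : ℝ) *
              (Nat.factorial (j - k) : ℝ)) *
          (lam / th) ^ (j - k) * Real.exp (-(k : ℝ) * th * t) *
          (1 - Real.exp (-th * t)) ^ (i + j - 2 * k) *
          Real.exp (-(lam / th) * (1 - Real.exp (-th * t)))
    (∀ j : ℕ, r j 0 = if j = i then 1 else 0) ∧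
      ∀ t : ℝ, 0 < t → ∀ j : ℕ,
        deriv (fun s => r j s) t =
          -(lam + (j : ℝ) * th) * r j t + ((j : ℝ) + 1) * th * r (j + 1) t +
            lam * (if j = 0 then 0 else r (j - 1) t) := by
  intro r
  have hr : ∀ (j : ℕ) (t : ℝ), r j t = obR lam th i j t := fun _ _ => rfl
  have hth' : th ≠ 0 := ne_of_gt hth
  constructor
  · intro j
    rw [hr]
    exact obR_zero lam th i j
  · intro t ht j
    simp only [hr]
    rw [(obR_hasDerivAt lam th i j t).deriv]
    simp only [obR_eq]
    have hcore := core (lam / th) (Real.exp (-th * t)) i j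
    have hl : lam / th * th = lam := div_mul_cancel₀ lam hth'
    by_cases hj : j = 0
    · subst hj
      rw [if_pos rfl] at hcore ⊢
      linear_combination (th * Real.exp (-(lam / th) * (1 - Real.exp (-th * t)))) * hcore
        - (obS (lam / th) (Real.exp (-th * t)) i 0
            * Real.exp (-(lam / th) * (1 - Real.exp (-th * t)))) * hl
    · rw [if_neg hj] at hcore ⊢
      linear_combination (th * Real.exp (-(lam / th) * (1 - Real.exp (-th * t)))) * hcore
        + ((obS (lam / th) (Real.exp (-th * t)) i (j - 1)
              - obS (lam / th) (Real.exp (-th * t)) i j)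
            * Real.exp (-(lam / th) * (1 - Real.exp (-th * t)))) * hl
end

section
/- Let λ > 0, θ > 0, let (g_n)_{n≥1} be nonnegative reals with Σ_{n≥1} g_n = 1, and let (ρ_n)_{n≥0} be a nonnegative summable sequence satisfying the balance equations: 0 = −λρ_0 + θρ_1, and for every n ≥ 1, 0 = −(λ + nθ)ρ_n + (n+1)θ ρ_{n+1} + λ Σ_{i=1}^{n} g_i ρ_{n−i}. Let ψ(z) = Σ_{n=0}^∞ ρ_n z^n and G(z) = Σ_{n=1}^∞ g_n z^n. Then for every z ∈ [0,1), ψ is differentiable at z and θ(1−z) ψ'(z) = λ(1 − G(z)) ψ(z). -/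
/-- If `(ρ_n)` is a nonnegative summable sequence satisfying the
balance equations of the queue with limit-order arrival rate `λ`, order-size
distribution `(g_n)_{n≥1}` and per-share cancellation rate `θ`, then its generating
function `ψ(z) = Σ ρ_n z^n` is differentiable on `[0,1)` and satisfies
`θ(1-z)ψ'(z) = λ(1-G(z))ψ(z)`, where `G(z) = Σ_{n≥1} g_n z^n`. -/
theorem orderbook_stationary_generating_function_ode
    (lam th : ℝ) (hlam : 0 < lam) (hth : 0 < th)
    (g ρ : ℕ → ℝ) (hg0 : g 0 = 0) (hgnn : ∀ n, 0 ≤ g n) (hgsum : HasSum g 1)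
    (hρnn : ∀ n, 0 ≤ ρ n) (hρsum : Summable ρ)
    (hbal0 : 0 = -lam * ρ 0 + th * ρ 1)
    (hbal : ∀ n : ℕ, 1 ≤ n →
      0 = -(lam + (n : ℝ) * th) * ρ n + ((n : ℝ) + 1) * th * ρ (n + 1) +
        lam * ∑ i ∈ Finset.Icc 1 n, g i * ρ (n - i)) :
    ∀ z ∈ Set.Ico (0 : ℝ) 1,
      DifferentiableAt ℝ (fun w : ℝ => ∑' n : ℕ, ρ n * w ^ n) z ∧
        th * (1 - z) * deriv (fun w : ℝ => ∑' n : ℕ, ρ n * w ^ n) z =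
          lam * (1 - ∑' n : ℕ, g n * z ^ n) * ∑' n : ℕ, ρ n * z ^ n := by
  rintro z ⟨hz0, hz1⟩
  set r : ℝ := (z + 1) / 2 with hrdef
  have hr0 : 0 < r := by positivity
  have hzr : z < r := by simp only [hrdef]; linarith
  have hr1 : r < 1 := by simp only [hrdef]; linarith
  -- bound on ρ
  set C : ℝ := ∑' n, ρ n with hCdef
  have hC : ∀ n, ρ n ≤ C := fun n => Summable.le_tsum hρsum n (fun m _ => hρnn m)
  have hC0 : 0 ≤ C := le_trans (hρnn 0) (hC 0)
  -- summable bound for derivative series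
  have hu1 : Summable (fun n : ℕ => ((n : ℝ) + 1) * r ^ n) := by
    have h1 : Summable (fun n : ℕ => (n : ℝ) ^ 1 * r ^ n) :=
      summable_pow_mul_geometric_of_norm_lt_one 1 (by rw [Real.norm_eq_abs, abs_of_pos hr0]; exact hr1)
    have h2 : Summable (fun n : ℕ => r ^ n) := summable_geometric_of_lt_one hr0.le hr1
    simpa [add_mul, pow_one] using h1.add h2
  have hus : Summable (fun n : ℕ => (n : ℝ) * r ^ (n - 1)) := by
    rw [← summable_nat_add_iff 1]
    convert hu1 using 2 with n
    case e'_3 => rfl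
    push_cast
    simp
  have hu : Summable (fun n : ℕ => C * ((n : ℝ) * r ^ (n - 1))) := hus.mul_left C
  -- the derivative statement
  have hg' : ∀ (n : ℕ) (y : ℝ), y ∈ Set.Ioo (-r) r →
      ‖ρ n * ((n : ℝ) * y ^ (n - 1))‖ ≤ C * ((n : ℝ) * r ^ (n - 1)) := by
    rintro n y ⟨hy1, hy2⟩
    have hyr : |y| ≤ r := by rw [abs_le]; constructor <;> linarith
    rw [Real.norm_eq_abs, abs_mul, abs_mul, abs_of_nonneg (hρnn n), abs_of_nonneg (Nat.cast_nonneg n)]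
    have h1 : |y ^ (n-1)| ≤ r ^ (n-1) := by
      rw [abs_pow]; exact pow_le_pow_left₀ (abs_nonneg y) hyr _
    exact mul_le_mul (hC n) (mul_le_mul_of_nonneg_left h1 (Nat.cast_nonneg n)) (by positivity) hC0
  have hgdiff : ∀ (n : ℕ) (y : ℝ), y ∈ Set.Ioo (-r) r →
      HasDerivAt (fun w : ℝ => ρ n * w ^ n) (ρ n * ((n : ℝ) * y ^ (n - 1))) y :=
    fun n y _ => (hasDerivAt_pow n y).const_mul (ρ n)
  have hzmem : z ∈ Set.Ioo (-r) r := ⟨by linarith, hzr⟩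
  have Sa : Summable (fun n : ℕ => ρ n * z ^ n) := by
    apply Summable.of_norm_bounded hρsum
    intro n
    rw [Real.norm_eq_abs, abs_mul, abs_of_nonneg (hρnn n), abs_pow, abs_of_nonneg hz0]
    calc ρ n * z ^ n ≤ ρ n * 1 := by
          apply mul_le_mul_of_nonneg_left (pow_le_one₀ hz0 hz1.le) (hρnn n)
      _ = ρ n := mul_one _
  have HD : HasDerivAt (fun w : ℝ => ∑' n : ℕ, ρ n * w ^ n)
      (∑' n : ℕ, ρ n * ((n : ℝ) * z ^ (n - 1))) z :=
    hasDerivAt_tsum_of_isPreconnected hu isOpen_Ioo (isPreconnected_Ioo)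
      hgdiff hg' hzmem Sa hzmem
  refine ⟨HD.differentiableAt, ?_⟩
  rw [HD.deriv]
  -- notation
  set a : ℕ → ℝ := fun n => ρ n * z ^ n with hadef
  set b : ℕ → ℝ := fun n => g n * z ^ n with hbdef
  set d : ℕ → ℝ := fun n => ρ n * ((n : ℝ) * z ^ (n - 1)) with hddef
  have Sd : Summable d := by
    apply Summable.of_norm_bounded hu
    intro n; exact hg' n z hzmem
  have Sgsum : Summable g := hgsum.summable
  have Sb : Summable b := by
    apply Summable.of_norm_bounded Sgsum
    intro n
    rw [hbdef, Real.norm_eq_abs, abs_mul, abs_of_nonneg (hgnn n), abs_pow, abs_of_nonneg hz0]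
    calc g n * z ^ n ≤ g n * 1 := by
          apply mul_le_mul_of_nonneg_left (pow_le_one₀ hz0 hz1.le) (hgnn n)
      _ = g n := mul_one _
  have ha' : Summable (fun n => ‖a n‖) := by simpa [Real.norm_eq_abs] using Sa.abs
  have hb' : Summable (fun n => ‖b n‖) := by simpa [Real.norm_eq_abs] using Sb.abs
  set c : ℕ → ℝ := fun n => ∑ k ∈ Finset.range (n + 1), b k * a (n - k) with hcdef
  have Sc : Summable c := (summable_norm_sum_mul_range_of_summable_norm hb' ha').of_norm
  have hGψ : (∑' n, b n) * (∑' n, a n) = ∑' n, c n :=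
    tsum_mul_tsum_eq_tsum_sum_range_of_summable_norm hb' ha'
  -- shifted derivative series
  set e : ℕ → ℝ := fun n => ρ (n + 1) * (((n : ℝ) + 1) * z ^ n) with hedef
  have hde : ∀ n : ℕ, d (n + 1) = e n := by
    intro n; simp only [hddef, hedef]; push_cast; simp
  have Se : Summable e := by
    have := (summable_nat_add_iff 1).mpr Sd
    exact this.congr hde
  have hDe : (∑' n, d n) = ∑' n, e n := by
    rw [Summable.tsum_eq_zero_add Sd]
    simp only [hddef]
    rw [show ρ 0 * ((0:ℕ) * z ^ (0 - 1) : ℝ) = 0 by simp]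
    rw [zero_add]
    exact tsum_congr hde
  -- z * d n = n * ρ n * z ^ n
  have hzd : ∀ n : ℕ, (n : ℝ) * ρ n * z ^ n = z * d n := by
    intro n
    cases n with
    | zero => simp [hddef]
    | succ m =>
      simp only [hddef, Nat.add_sub_cancel]
      push_cast
      ring
  have Szd : Summable (fun n : ℕ => (n : ℝ) * ρ n * z ^ n) :=
    (Sd.mul_left z).congr (fun n => (hzd n).symm)
  have hzdsum : (∑' n : ℕ, (n : ℝ) * ρ n * z ^ n) = z * ∑' n, d n := by
    rw [← tsum_mul_left]; exact tsum_congr hzd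
  have hcI : ∀ n : ℕ, c n = (∑ i ∈ Finset.Icc 1 n, g i * ρ (n - i)) * z ^ n := by
    intro n
    have hsub : Finset.Icc 1 n ⊆ Finset.range (n + 1) := by
      intro i hi
      rw [Finset.mem_range]
      exact Nat.lt_succ_of_le (Finset.mem_Icc.mp hi).2
    rw [Finset.sum_mul, Finset.sum_subset hsub (by
      intro i hi hni
      have hi0 : i = 0 := by
        rcases Nat.eq_zero_or_pos i with h | h
        · exact h
        · exact absurd (Finset.mem_Icc.mpr ⟨h, Nat.lt_succ_iff.mp (Finset.mem_range.mp hi)⟩) hni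
      simp [hi0, hg0])]
    simp only [hcdef]
    apply Finset.sum_congr rfl
    intro k hk
    have hkn : k ≤ n := Nat.lt_succ_iff.mp (Finset.mem_range.mp hk)
    simp only [hbdef, hadef]
    rw [mul_mul_mul_comm, ← pow_add, Nat.add_sub_cancel' hkn]
  have hE : ∀ n : ℕ, lam * a n + th * ((n : ℝ) * ρ n * z ^ n) = th * e n + lam * c n := by
    intro n
    rcases Nat.eq_zero_or_pos n with h0 | h1
    · subst h0
      have hc0 : c 0 = 0 := by simp [hcI 0]
      simp only [hadef, hedef, hc0, Nat.cast_zero, pow_zero, mul_one, zero_mul, mul_zero,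
        add_zero, zero_add]
      linear_combination hbal0
    · have hb := hbal n h1
      rw [hcI n]
      simp only [hadef, hedef]
      linear_combination (z ^ n) * hb
  have hTeq : lam * (∑' n, a n) + th * (z * ∑' n, d n) = th * (∑' n, e n) + lam * (∑' n, c n) := by
    have h1 := tsum_congr (L := SummationFilter.unconditional ℕ) hE
    rw [Summable.tsum_add (Sa.mul_left lam) (Szd.mul_left th),
      Summable.tsum_add (Se.mul_left th) (Sc.mul_left lam),
      tsum_mul_left, tsum_mul_left, tsum_mul_left, tsum_mul_left] at h1
    rw [← hzdsum]
    exact h1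
  rw [← hDe] at hTeq
  linear_combination -hTeq + lam * hGψ
end

section
/- Let λ > 0, θ > 0, let (g_n)_{n≥1} be nonnegative reals with Σ_{n≥1} g_n = 1 such that the integral I = ∫_0^1 (1−G(u))/(1−u) du is finite, where G(z) = Σ_{n=1}^∞ g_n z^n. Let (ρ_n)_{n≥0} be a nonnegative sequence with Σ_{n≥0} ρ_n = 1 satisfying the balance equations: 0 = −λρ_0 + θρ_1, and for n ≥ 1, 0 = −(λ+nθ)ρ_n + (n+1)θ ρ_{n+1} + λ Σ_{i=1}^n g_i ρ_{n−i}. Then ρ_0 = exp( −(λ/θ) I ). -/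
open MeasureTheory Filter Set Finset Topology

private lemma obq_summable_u {r : ℝ} (h0 : 0 ≤ r) (h1 : r < 1) :
    Summable (fun n : ℕ => ((n : ℝ) + 1) * r ^ (n - 1)) := by
  rw [← summable_nat_add_iff 1]
  have h := summable_pow_mul_geometric_of_norm_lt_one (R := ℝ) 1
    (r := r) (by rwa [Real.norm_eq_abs, abs_of_nonneg h0])
  have h2 := (summable_geometric_of_lt_one h0 h1).mul_left 2
  exact (h.add h2).congr fun n => by
    simp only [Nat.add_sub_cancel]; push_cast; ring

private lemma obq_bound_aux {a z r : ℝ} (ha0 : 0 ≤ a) (ha1 : a ≤ 1) (hzr : |z| ≤ r) (n : ℕ) :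
    ‖a * ((n : ℝ) * z ^ (n - 1))‖ ≤ ((n : ℝ) + 1) * r ^ (n - 1) := by
  have hr0 : 0 ≤ r := le_trans (abs_nonneg z) hzr
  have h1 : ‖a * ((n : ℝ) * z ^ (n - 1))‖ = a * ((n : ℝ) * |z| ^ (n - 1)) := by
    rw [Real.norm_eq_abs, abs_mul, abs_of_nonneg ha0, abs_mul, abs_pow, Nat.abs_cast]
  rw [h1]
  calc a * ((n : ℝ) * |z| ^ (n - 1)) ≤ 1 * ((n : ℝ) * |z| ^ (n - 1)) :=
        mul_le_mul_of_nonneg_right ha1 (by positivity)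
    _ = (n : ℝ) * |z| ^ (n - 1) := one_mul _
    _ ≤ ((n : ℝ) + 1) * r ^ (n - 1) :=
        mul_le_mul (by linarith) (pow_le_pow_left₀ (abs_nonneg z) hzr _)
          (by positivity) (by positivity)

/-- If the stationary distribution `(ρ_n)` of the order-book queue
(arrival rate `λ`, order-size distribution `(g_n)_{n≥1}`, cancellation rate `θ`) is a
probability distribution and `I = ∫_0^1 (1-G(u))/(1-u) du` is finite, then
`ρ_0 = exp(-(λ/θ) I)`. -/
theorem orderbook_stationary_rho_zero
    (lam th : ℝ) (hlam : 0 < lam) (hth : 0 < th)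
    (g : ℕ → ℝ) (hg0 : g 0 = 0) (hgnn : ∀ n, 0 ≤ g n) (hgsum : HasSum g 1)
    (hI : MeasureTheory.IntegrableOn
      (fun u : ℝ => (1 - ∑' n : ℕ, g n * u ^ n) / (1 - u)) (Set.Ioo 0 1))
    (ρ : ℕ → ℝ) (hρnn : ∀ n, 0 ≤ ρ n) (hρsum : HasSum ρ 1)
    (hbal0 : 0 = -lam * ρ 0 + th * ρ 1)
    (hbal : ∀ n : ℕ, 1 ≤ n →
      0 = -(lam + (n : ℝ) * th) * ρ n + ((n : ℝ) + 1) * th * ρ (n + 1) +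
        lam * ∑ i ∈ Finset.Icc 1 n, g i * ρ (n - i)) :
    ρ 0 = Real.exp (-(lam / th) *
      ∫ u in Set.Ioo (0:ℝ) 1, (1 - ∑' n : ℕ, g n * u ^ n) / (1 - u)) := by
  set H : ℝ → ℝ := fun u : ℝ => (1 - ∑' n : ℕ, g n * u ^ n) / (1 - u) with hHdef
  set G : ℝ → ℝ := fun u : ℝ => ∑' n : ℕ, g n * u ^ n with hGdef
  set f : ℝ → ℝ := fun z : ℝ => ∑' n : ℕ, ρ n * z ^ n with hfdef
  set D : ℝ → ℝ := fun z : ℝ => ∑' n : ℕ, ρ n * ((n : ℝ) * z ^ (n - 1)) with hDdef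
  have hρle : ∀ n, ρ n ≤ 1 := fun n => le_hasSum hρsum n fun m _ => hρnn m
  -- positivity of ρ 0
  have hρ0pos : 0 < ρ 0 := by
    rcases (hρnn 0).eq_or_lt with h0 | h
    · exfalso
      have hzero : ∀ n, ρ n = 0 := by
        intro n
        induction n using Nat.strong_induction_on with
        | _ n ih =>
          rcases n with _ | n
          · exact h0.symm
          rcases n with _ | n
          · have h00 : ρ 0 = 0 := h0.symm
            rw [h00] at hbal0
            have : th * ρ 1 = 0 := by linarith
            exact (mul_eq_zero.mp this).resolve_left hth.ne'
          · have h1 := hbal (n + 1) (by omega)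
            have hρn : ρ (n + 1) = 0 := ih (n + 1) (by omega)
            have hS : ∑ i ∈ Finset.Icc 1 (n + 1), g i * ρ (n + 1 - i) = 0 :=
              Finset.sum_eq_zero fun i hi => by
                rw [ih (n + 1 - i) (by omega), mul_zero]
            rw [hρn, hS] at h1
            have h2 : (((n + 1 : ℕ) : ℝ) + 1) * th * ρ (n + 1 + 1) = 0 := by
              simpa using h1.symm
            have hpos : (0:ℝ) < (((n + 1 : ℕ) : ℝ) + 1) * th := by positivity
            exact (mul_eq_zero.mp h2).resolve_left hpos.ne'
      have : HasSum ρ 0 := by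
        have : ρ = fun _ => (0:ℝ) := funext hzero
        rw [this]; exact hasSum_zero
      exact (one_ne_zero : (1:ℝ) ≠ 0) (hρsum.unique this)
    · exact h
  -- summability of the series at any z ∈ [0,1)
  have Sρ : ∀ z : ℝ, |z| ≤ 1 → Summable fun n => ρ n * z ^ n := by
    intro z hz
    refine Summable.of_norm_bounded hρsum.summable fun n => ?_
    rw [Real.norm_eq_abs, abs_mul, abs_of_nonneg (hρnn n), abs_pow]
    calc ρ n * |z| ^ n ≤ ρ n * 1 ^ n :=
          mul_le_mul_of_nonneg_left (pow_le_pow_left₀ (abs_nonneg z) hz n) (hρnn n)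
      _ = ρ n := by rw [one_pow, mul_one]
  have Sg : ∀ z : ℝ, |z| ≤ 1 → Summable fun n => g n * z ^ n := by
    intro z hz
    refine Summable.of_norm_bounded hgsum.summable fun n => ?_
    rw [Real.norm_eq_abs, abs_mul, abs_of_nonneg (hgnn n), abs_pow]
    calc g n * |z| ^ n ≤ g n * 1 ^ n :=
          mul_le_mul_of_nonneg_left (pow_le_pow_left₀ (abs_nonneg z) hz n) (hgnn n)
      _ = g n := by rw [one_pow, mul_one]
  have SD : ∀ z ∈ Ico (0:ℝ) 1, Summable fun n => ρ n * ((n : ℝ) * z ^ (n - 1)) := by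
    intro z hz
    exact Summable.of_norm_bounded (obq_summable_u hz.1 hz.2)
      fun n => obq_bound_aux (hρnn n) (hρle n) (le_of_eq (abs_of_nonneg hz.1)) n
  -- derivative of f
  have hasDeriv : ∀ z ∈ Ico (0:ℝ) 1, HasDerivAt f (D z) z := by
    intro z hz
    set r : ℝ := (z + 1) / 2 with hrdef
    have hr0 : 0 ≤ r := by simp only [hrdef]; linarith [hz.1]
    have hr1 : r < 1 := by simp only [hrdef]; linarith [hz.2]
    have hzr : z < r := by simp only [hrdef]; linarith [hz.2]
    have hmem : z ∈ Ioo (-r) r := ⟨by linarith [hz.1], hzr⟩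
    exact hasDerivAt_tsum_of_isPreconnected (g := fun (n : ℕ) (w : ℝ) => ρ n * w ^ n)
      (g' := fun (n : ℕ) (w : ℝ) => ρ n * ((n : ℝ) * w ^ (n - 1))) (obq_summable_u hr0 hr1)
      isOpen_Ioo (convex_Ioo _ _).isPreconnected
      (fun n y _ => (hasDerivAt_pow n y).const_mul (ρ n))
      (fun n y hy => obq_bound_aux (hρnn n) (hρle n)
        (le_of_lt (abs_lt.2 ⟨hy.1, hy.2⟩)) n)
      hmem (Sρ z (by rw [abs_of_nonneg hz.1]; exact hz.2.le)) hmem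
  -- the ODE : th * (1 - z) * D z = lam * (1 - G z) * f z on [0,1)
  have hODE : ∀ z ∈ Ico (0:ℝ) 1, th * (1 - z) * D z = lam * (1 - G z) * f z := by
    intro z hz
    have hz0 : 0 ≤ z := hz.1
    have hz1 : z < 1 := hz.2
    have habs : |z| ≤ 1 := by rw [abs_of_nonneg hz0]; exact hz1.le
    have Sρz := Sρ z habs
    have Sgz := Sg z habs
    have SDz := SD z hz
    have Snρ : Summable fun n : ℕ => (n : ℝ) * ρ n * z ^ n := by
      refine (SDz.mul_left z).congr fun n => ?_
      rcases n with _ | m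
      · simp
      · simp only [Nat.add_sub_cancel]; push_cast; ring
    have Snormρ : Summable fun n => ‖ρ n * z ^ n‖ :=
      Sρz.congr fun n =>
        (Real.norm_of_nonneg (mul_nonneg (hρnn n) (pow_nonneg hz0 n))).symm
    have Snormg : Summable fun n => ‖g n * z ^ n‖ :=
      Sgz.congr fun n =>
        (Real.norm_of_nonneg (mul_nonneg (hgnn n) (pow_nonneg hz0 n))).symm
    have hinner : ∀ n : ℕ,
        ∑ k ∈ range (n + 1), (g k * z ^ k) * (ρ (n - k) * z ^ (n - k)) =
          (∑ i ∈ Finset.Icc 1 n, g i * ρ (n - i)) * z ^ n := by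
      intro n
      have h1 : ∀ k ∈ range (n + 1),
          (g k * z ^ k) * (ρ (n - k) * z ^ (n - k)) = g k * ρ (n - k) * z ^ n := by
        intro k hk
        have hk' : k ≤ n := Nat.lt_succ_iff.mp (mem_range.mp hk)
        rw [show (g k * z ^ k) * (ρ (n - k) * z ^ (n - k)) =
          g k * ρ (n - k) * (z ^ k * z ^ (n - k)) by ring, ← pow_add,
          Nat.add_sub_cancel' hk']
      rw [Finset.sum_congr rfl h1, ← Finset.sum_mul]
      congr 1
      refine (Finset.sum_subset ?_ ?_).symm
      · intro i hi
        rw [Finset.mem_Icc] at hi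
        exact mem_range.mpr (by omega)
      · intro x hx hnx
        rw [Finset.mem_Icc] at hnx
        have hx' : x < n + 1 := mem_range.mp hx
        have : x = 0 := by omega
        rw [this, hg0, zero_mul]
    have hC : G z * f z = ∑' n, (∑ i ∈ Finset.Icc 1 n, g i * ρ (n - i)) * z ^ n := by
      rw [hGdef, hfdef]
      simp only
      rw [tsum_mul_tsum_eq_tsum_sum_range_of_summable_norm Snormg Snormρ]
      exact tsum_congr hinner
    have SS : Summable fun n => (∑ i ∈ Finset.Icc 1 n, g i * ρ (n - i)) * z ^ n :=
      ((summable_norm_sum_mul_range_of_summable_norm Snormg Snormρ).of_norm).congr hinner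
    have Sshift : Summable fun m : ℕ => ρ (m + 1) * (((m : ℝ) + 1) * z ^ m) := by
      refine ((summable_nat_add_iff 1).mpr SDz).congr fun m => ?_
      simp only [Nat.add_sub_cancel]; push_cast; ring
    have hshift : D z = ∑' m : ℕ, ρ (m + 1) * (((m : ℝ) + 1) * z ^ m) := by
      rw [hDdef]
      simp only
      rw [Summable.tsum_eq_zero_add SDz]
      simp only [Nat.cast_zero, zero_mul, mul_zero, zero_add, Nat.add_sub_cancel]
      exact tsum_congr fun m => by push_cast; ring
    have key : ∀ n : ℕ,
        th * (ρ (n + 1) * (((n : ℝ) + 1) * z ^ n)) =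
          lam * (ρ n * z ^ n) + th * ((n : ℝ) * ρ n * z ^ n) -
            lam * ((∑ i ∈ Finset.Icc 1 n, g i * ρ (n - i)) * z ^ n) := by
      intro n
      rcases Nat.eq_zero_or_pos n with h | h
      · subst h
        simp only [Nat.cast_zero, zero_add, pow_zero, mul_one, zero_mul, mul_zero]
        rw [show Finset.Icc 1 0 = (∅ : Finset ℕ) by rfl]
        simp only [Finset.sum_empty, zero_mul, mul_zero, sub_zero]
        linarith [hbal0]
      · have hb := hbal n h
        linear_combination (-z ^ n) * hb
    have hsum1 : Summable fun n => lam * (ρ n * z ^ n) := Sρz.mul_left lam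
    have hsum2 : Summable fun n : ℕ => th * ((n : ℝ) * ρ n * z ^ n) := Snρ.mul_left th
    have hsum3 : Summable fun n =>
        lam * ((∑ i ∈ Finset.Icc 1 n, g i * ρ (n - i)) * z ^ n) := SS.mul_left lam
    have hmain : th * D z = lam * f z + th * (z * D z) - lam * (G z * f z) := by
      have hL : ∑' n : ℕ, th * (ρ (n + 1) * (((n : ℝ) + 1) * z ^ n)) = th * D z := by
        rw [tsum_mul_left, ← hshift]
      have hzD : ∑' n : ℕ, (n : ℝ) * ρ n * z ^ n = z * D z := by
        rw [← tsum_mul_left]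
        exact tsum_congr fun n => by
          rcases n with _ | m
          · simp
          · simp only [Nat.add_sub_cancel]; push_cast; ring
      have hR : ∑' n : ℕ, (lam * (ρ n * z ^ n) + th * ((n : ℝ) * ρ n * z ^ n) -
          lam * ((∑ i ∈ Finset.Icc 1 n, g i * ρ (n - i)) * z ^ n)) =
          lam * f z + th * (z * D z) - lam * (G z * f z) := by
        rw [Summable.tsum_sub (hsum1.add hsum2) hsum3, Summable.tsum_add hsum1 hsum2,
          tsum_mul_left, tsum_mul_left, tsum_mul_left, hzD, hC]
      rw [← hL, ← hR]
      exact tsum_congr key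
    linear_combination hmain
  -- f is positive on [0,1)
  have hfpos : ∀ z ∈ Ico (0:ℝ) 1, 0 < f z := by
    intro z hz
    have habs : |z| ≤ 1 := by rw [abs_of_nonneg hz.1]; exact hz.2.le
    have h1 : ρ 0 * z ^ 0 ≤ f z :=
      Summable.le_tsum (Sρ z habs) 0 fun m _ => mul_nonneg (hρnn m) (pow_nonneg hz.1 m)
    rw [pow_zero, mul_one] at h1
    linarith
  -- FTC on [0, z] for z ∈ (0,1)
  have hFTC : ∀ z ∈ Ioo (0:ℝ) 1,
      (∫ t in (0:ℝ)..z, lam / th * H t) = Real.log (f z) - Real.log (f 0) := by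
    intro z hz
    refine intervalIntegral.integral_eq_sub_of_hasDerivAt (f := fun w => Real.log (f w))
      (f' := fun t => lam / th * H t) ?_ ?_
    · intro t ht
      rw [uIcc_of_le hz.1.le] at ht
      have htI : t ∈ Ico (0:ℝ) 1 := ⟨ht.1, lt_of_le_of_lt ht.2 hz.2⟩
      have hft : 0 < f t := hfpos t htI
      have hDt := hasDeriv t htI
      have hODEt := hODE t htI
      have h1t : (0:ℝ) < 1 - t := by linarith [htI.2]
      have heq : lam / th * H t = D t / f t := by
        rw [eq_div_iff hft.ne']
        rw [show H t = (1 - G t) / (1 - t) from rfl]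
        field_simp
        linear_combination (-1 : ℝ) * hODEt
      simp only [heq]
      exact hDt.log hft.ne'
    · have hmono : IntegrableOn H (Ioc 0 z) :=
        hI.mono_set fun x hx => ⟨hx.1, lt_of_le_of_lt hx.2 hz.2⟩
      exact ((intervalIntegrable_iff_integrableOn_Ioc_of_le hz.1.le).mpr hmono).const_mul _
  -- f 0 = ρ 0
  have hf0 : f 0 = ρ 0 := by
    rw [hfdef]
    simp only
    rw [tsum_eq_single 0 (fun n hn => by simp [zero_pow hn])]
    simp
  -- Abel limit : f z → 1 as z → 1⁻
  have hA : Tendsto (fun z => Real.log (f z)) (𝓝[<] (1:ℝ)) (𝓝 0) := by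
    have h1 := Real.tendsto_tsum_powerSeries_nhdsWithin_lt hρsum.tendsto_sum_nat
    have h2 := (Real.continuousAt_log one_ne_zero).tendsto.comp h1
    simpa [Real.log_one, Function.comp_def] using h2
  -- primitive limit
  have hP : Tendsto (fun z => ∫ t in Ioc (0:ℝ) z, H t) (𝓝[<] (1:ℝ))
      (𝓝 (∫ u in Ioo (0:ℝ) 1, H u)) := by
    have hint : IntegrableOn H (Icc (0:ℝ) 1) :=
      (integrableOn_Icc_iff_integrableOn_Ioo).mpr hI
    have hc := (intervalIntegral.continuousOn_primitive hint) 1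
      (right_mem_Icc.mpr zero_le_one)
    have heq : (∫ t in Ioc (0:ℝ) 1, H t) = ∫ u in Ioo (0:ℝ) 1, H u :=
      MeasureTheory.integral_Ioc_eq_integral_Ioo
    rw [← heq]
    refine hc.mono_left ?_
    rw [← nhdsWithin_Ioo_eq_nhdsLT (zero_lt_one (α := ℝ))]
    exact nhdsWithin_mono 1 Ioo_subset_Icc_self
  have hB : Tendsto (fun z => Real.log (ρ 0) + lam / th * ∫ t in Ioc (0:ℝ) z, H t)
      (𝓝[<] (1:ℝ)) (𝓝 (Real.log (ρ 0) + lam / th * ∫ u in Ioo (0:ℝ) 1, H u)) :=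
    tendsto_const_nhds.add (hP.const_mul _)
  have heqv : ∀ᶠ z in 𝓝[<] (1:ℝ), Real.log (f z) =
      Real.log (ρ 0) + lam / th * ∫ t in Ioc (0:ℝ) z, H t := by
    filter_upwards [Ioo_mem_nhdsLT_of_mem
      (show (1:ℝ) ∈ Ioc (0:ℝ) 1 from ⟨zero_lt_one, le_refl 1⟩)] with z hz
    have h1 := hFTC z hz
    rw [intervalIntegral.integral_const_mul, intervalIntegral.integral_of_le hz.1.le,
      hf0] at h1
    linarith
  have hkey : Real.log (ρ 0) + lam / th * ∫ u in Ioo (0:ℝ) 1, H u = 0 :=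
    tendsto_nhds_unique hB (hA.congr' heqv)
  have hlog : Real.log (ρ 0) = -(lam / th) * ∫ u in Ioo (0:ℝ) 1, H u := by linarith
  rw [← hlog]
  exact (Real.exp_log hρ0pos).symm
end

section
/- Let λ > 0, θ > 0, let (g_n)_{n≥1} be nonnegative reals with Σ_{n≥1} g_n = 1 such that ∫_0^1 (1−G(u))/(1−u) du < ∞, where G(z) = Σ_{n=1}^∞ g_n z^n. If (ρ_n)_{n≥0} and (ρ'_n)_{n≥0} are two nonnegative sequences, each summing to 1 and each satisfying the balance equations 0 = −λρ_0 + θρ_1 and 0 = −(λ+nθ)ρ_n + (n+1)θρ_{n+1} + λΣ_{i=1}^n g_i ρ_{n−i} for n ≥ 1, then ρ_n = ρ'_n for all n. -/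
/-- Auxiliary: a sequence satisfying the balance equations is determined by its
value at 0. -/
lemma orderbook_det (lam th : ℝ) (hth : th ≠ 0) (g : ℕ → ℝ) (σ σ' : ℕ → ℝ)
    (h0 : σ 0 = σ' 0)
    (hb0 : 0 = -lam * σ 0 + th * σ 1)
    (hb : ∀ n : ℕ, 1 ≤ n →
      0 = -(lam + (n : ℝ) * th) * σ n + ((n : ℝ) + 1) * th * σ (n + 1) +
        lam * ∑ i ∈ Finset.Icc 1 n, g i * σ (n - i))
    (hb0' : 0 = -lam * σ' 0 + th * σ' 1)
    (hb' : ∀ n : ℕ, 1 ≤ n →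
      0 = -(lam + (n : ℝ) * th) * σ' n + ((n : ℝ) + 1) * th * σ' (n + 1) +
        lam * ∑ i ∈ Finset.Icc 1 n, g i * σ' (n - i)) :
    ∀ n, σ n = σ' n := by
  intro n
  induction n using Nat.strong_induction_on with
  | _ n ih =>
    match n with
    | 0 => exact h0
    | 1 =>
      have e : th * σ 1 = th * σ' 1 := by rw [show σ' 0 = σ 0 from h0.symm] at hb0'; linarith
      exact mul_left_cancel₀ hth e
    | (n+2) =>
      have h1 := hb (n+1) (by omega)
      have h2 := hb' (n+1) (by omega)
      have hsum : ∑ i ∈ Finset.Icc 1 (n+1), g i * σ (n+1-i)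
          = ∑ i ∈ Finset.Icc 1 (n+1), g i * σ' (n+1-i) := by
        refine Finset.sum_congr rfl fun i hi => ?_
        rw [ih (n+1-i) (by omega)]
      have hσn1 : σ (n+1) = σ' (n+1) := ih (n+1) (by omega)
      rw [hsum, hσn1] at h1
      have hc : (((n+1 : ℕ) : ℝ) + 1) * th ≠ 0 :=
        mul_ne_zero (by positivity) hth
      have e : (((n+1 : ℕ) : ℝ) + 1) * th * σ (n+1+1)
          = (((n+1 : ℕ) : ℝ) + 1) * th * σ' (n+1+1) := by linarith
      exact mul_left_cancel₀ hc e

/-- Uniqueness of the stationary probability distribution of the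
order-book queue: two nonnegative sequences summing to 1 which both satisfy the
balance equations (with `∫_0^1 (1-G(u))/(1-u) du` finite) coincide. -/
theorem orderbook_stationary_distribution_unique
    (lam th : ℝ) (hlam : 0 < lam) (hth : 0 < th)
    (g : ℕ → ℝ) (hg0 : g 0 = 0) (hgnn : ∀ n, 0 ≤ g n) (hgsum : HasSum g 1)
    (hI : MeasureTheory.IntegrableOn
      (fun u : ℝ => (1 - ∑' n : ℕ, g n * u ^ n) / (1 - u)) (Set.Ioo 0 1))
    (ρ ρ' : ℕ → ℝ)
    (hρnn : ∀ n, 0 ≤ ρ n) (hρsum : HasSum ρ 1)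
    (hbal0 : 0 = -lam * ρ 0 + th * ρ 1)
    (hbal : ∀ n : ℕ, 1 ≤ n →
      0 = -(lam + (n : ℝ) * th) * ρ n + ((n : ℝ) + 1) * th * ρ (n + 1) +
        lam * ∑ i ∈ Finset.Icc 1 n, g i * ρ (n - i))
    (hρ'nn : ∀ n, 0 ≤ ρ' n) (hρ'sum : HasSum ρ' 1)
    (hbal0' : 0 = -lam * ρ' 0 + th * ρ' 1)
    (hbal' : ∀ n : ℕ, 1 ≤ n →
      0 = -(lam + (n : ℝ) * th) * ρ' n + ((n : ℝ) + 1) * th * ρ' (n + 1) +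
        lam * ∑ i ∈ Finset.Icc 1 n, g i * ρ' (n - i)) :
    ∀ n : ℕ, ρ n = ρ' n := by
  have hthne : th ≠ 0 := ne_of_gt hth
  -- scaled sequences satisfy the balance equations
  have scale0 : ∀ (a : ℝ) (τ : ℕ → ℝ), (0 = -lam * τ 0 + th * τ 1) →
      (0 = -lam * (a * τ 0) + th * (a * τ 1)) := by
    intro a τ h
    have : -lam * (a * τ 0) + th * (a * τ 1) = a * (-lam * τ 0 + th * τ 1) := by ring
    rw [this, ← h, mul_zero]
  have scale : ∀ (a : ℝ) (τ : ℕ → ℝ),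
      (∀ n : ℕ, 1 ≤ n →
        0 = -(lam + (n : ℝ) * th) * τ n + ((n : ℝ) + 1) * th * τ (n + 1) +
          lam * ∑ i ∈ Finset.Icc 1 n, g i * τ (n - i)) →
      (∀ n : ℕ, 1 ≤ n →
        0 = -(lam + (n : ℝ) * th) * (a * τ n) + ((n : ℝ) + 1) * th * (a * τ (n + 1)) +
          lam * ∑ i ∈ Finset.Icc 1 n, g i * (a * τ (n - i))) := by
    intro a τ h n hn
    have hs : ∑ i ∈ Finset.Icc 1 n, g i * (a * τ (n - i))
        = a * ∑ i ∈ Finset.Icc 1 n, g i * τ (n - i) := by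
      rw [Finset.mul_sum]
      exact Finset.sum_congr rfl fun i _ => by ring
    rw [hs]
    linear_combination a * (h n hn)
  -- ρ 0 ≠ 0
  have hρ0 : ρ 0 ≠ 0 := by
    intro h0
    have hzero : ∀ n, ρ n = (fun _ : ℕ => (0 : ℝ)) n := by
      refine orderbook_det lam th hthne g ρ _ (by simpa using h0) hbal0 hbal ?_ ?_
      · simp
      · intro n hn; simp
    have : HasSum (fun _ : ℕ => (0 : ℝ)) 1 := by
      have := hρsum; rwa [funext hzero] at this
    have h10 : (1 : ℝ) = 0 := this.unique hasSum_zero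
    norm_num at h10
  -- cross-scaled sequences agree
  have key : ∀ n, ρ' 0 * ρ n = ρ 0 * ρ' n := by
    refine orderbook_det lam th hthne g (fun n => ρ' 0 * ρ n) (fun n => ρ 0 * ρ' n)
      (mul_comm _ _) (scale0 _ ρ hbal0) (scale _ ρ hbal) (scale0 _ ρ' hbal0')
      (scale _ ρ' hbal')
  -- sums give ρ' 0 = ρ 0
  have hs1 : HasSum (fun n => ρ' 0 * ρ n) (ρ' 0 * 1) := hρsum.mul_left _
  have hs2 : HasSum (fun n => ρ 0 * ρ' n) (ρ 0 * 1) := hρ'sum.mul_left _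
  have heq : ρ' 0 * 1 = ρ 0 * 1 := by
    refine hs1.unique ?_
    rwa [funext key]
  have h00 : ρ' 0 = ρ 0 := by simpa using heq
  intro n
  have := key n
  rw [h00] at this
  exact mul_left_cancel₀ hρ0 this
end

section
/- Fix λ > 0, θ > 0, 0 < q < 1, and a natural number i, and set G(z) = qz/(1−(1−q)z). Define, for z ∈ [0,1) and t ≥ 0, φ_i(z,t) = [1 − (1−z)e^{−θt}]^i · [ (q + (1−q)(1−z)e^{−θt}) / (1 − (1−q)z) ]^{λ/(θ(1−q))}. Then φ_i(z,0) = z^i for all z ∈ [0,1), and for all z ∈ [0,1) and t > 0, ∂φ_i/∂t(z,t) = θ(1−z) ∂φ_i/∂z(z,t) − λ(1−G(z)) φ_i(z,t). -/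
/-- In the order-book model with geometric order sizes
(parameter `q`, generating function `G(z) = qz/(1-(1-q)z)`), arrival rate `λ` and
cancellation rate `θ`, the function
`φ_i(z,t) = (1-(1-z)e^{-θt})^i ((q+(1-q)(1-z)e^{-θt})/(1-(1-q)z))^{λ/(θ(1-q))}`
satisfies `φ_i(z,0) = z^i` and the PDE `∂φ/∂t = θ(1-z)∂φ/∂z - λ(1-G(z))φ` on
`[0,1) × (0,∞)`. -/
theorem orderbook_generating_function_pde_geometric
    (lam th q : ℝ) (hlam : 0 < lam) (hth : 0 < th) (hq0 : 0 < q) (hq1 : q < 1)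
    (i : ℕ) :
    let φ : ℝ → ℝ → ℝ := fun z t =>
      (1 - (1 - z) * Real.exp (-th * t)) ^ i *
        ((q + (1 - q) * (1 - z) * Real.exp (-th * t)) / (1 - (1 - q) * z)) ^
          (lam / (th * (1 - q)))
    (∀ z ∈ Set.Ico (0 : ℝ) 1, φ z 0 = z ^ i) ∧
      ∀ z ∈ Set.Ico (0 : ℝ) 1, ∀ t : ℝ, 0 < t →
        deriv (fun s => φ z s) t =
          th * (1 - z) * deriv (fun w => φ w t) z -
            lam * (1 - q * z / (1 - (1 - q) * z)) * φ z t := by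
  intro φ
  have h1q : (0:ℝ) < 1 - q := by linarith
  constructor
  · intro z hz
    obtain ⟨hz0, hz1⟩ := hz
    have hD : (0:ℝ) < 1 - (1 - q) * z := by nlinarith
    show (1 - (1 - z) * Real.exp (-th * 0)) ^ i *
        ((q + (1 - q) * (1 - z) * Real.exp (-th * 0)) / (1 - (1 - q) * z)) ^
          (lam / (th * (1 - q))) = z ^ i
    rw [mul_zero, Real.exp_zero]
    have h2 : q + (1 - q) * (1 - z) * 1 = 1 - (1 - q) * z := by ring
    rw [h2, div_self hD.ne', Real.one_rpow]
    ring
  · intro z hz t ht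
    obtain ⟨hz0, hz1⟩ := hz
    have hz1' : (0:ℝ) < 1 - z := by linarith
    have hD : (0:ℝ) < 1 - (1 - q) * z := by nlinarith
    have hE : (0:ℝ) < Real.exp (-th * t) := Real.exp_pos _
    have hN : (0:ℝ) < q + (1 - q) * (1 - z) * Real.exp (-th * t) := by
      have := mul_pos (mul_pos h1q hz1') hE
      linarith
    have hB : (0:ℝ) < (q + (1 - q) * (1 - z) * Real.exp (-th * t)) / (1 - (1 - q) * z) :=
      div_pos hN hD
    -- t-derivative
    have hexp : HasDerivAt (fun s : ℝ => Real.exp (-th * s))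
        (Real.exp (-th * t) * (-th * 1)) t :=
      ((hasDerivAt_id t).const_mul (-th)).exp
    have hAt : HasDerivAt (fun s : ℝ => 1 - (1 - z) * Real.exp (-th * s))
        (-((1 - z) * (Real.exp (-th * t) * (-th * 1)))) t :=
      ((hexp.const_mul (1 - z))).const_sub 1
    have hApow := hAt.pow i
    have hNt : HasDerivAt (fun s : ℝ => q + (1 - q) * (1 - z) * Real.exp (-th * s))
        ((1 - q) * (1 - z) * (Real.exp (-th * t) * (-th * 1))) t :=
      ((hexp.const_mul ((1 - q) * (1 - z)))).const_add q
    have hBt := hNt.div_const (1 - (1 - q) * z)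
    have hBct := hBt.rpow_const (p := lam / (th * (1 - q))) (Or.inl hB.ne')
    have hT := hApow.mul hBct
    -- z-derivative
    have hlin : HasDerivAt (fun w : ℝ => (1 - w) * Real.exp (-th * t))
        (-1 * Real.exp (-th * t)) z :=
      (((hasDerivAt_id z).const_sub 1)).mul_const _
    have hAz : HasDerivAt (fun w : ℝ => 1 - (1 - w) * Real.exp (-th * t))
        (-(-1 * Real.exp (-th * t))) z := hlin.const_sub 1
    have hApz := hAz.pow i
    have hNz : HasDerivAt (fun w : ℝ => q + (1 - q) * (1 - w) * Real.exp (-th * t))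
        (((1 - q) * -1) * Real.exp (-th * t)) z :=
      ((((hasDerivAt_id z).const_sub 1).const_mul (1 - q)).mul_const _).const_add q
    have hDz : HasDerivAt (fun w : ℝ => 1 - (1 - q) * w) (-((1 - q) * 1)) z :=
      ((hasDerivAt_id z).const_mul (1 - q)).const_sub 1
    have hBz := hNz.div hDz hD.ne'
    have hBcz := hBz.rpow_const (p := lam / (th * (1 - q))) (Or.inl hB.ne')
    have hZ := hApz.mul hBcz
    simp only [φ]
    have hTd : deriv (fun s => (1 - (1 - z) * Real.exp (-th * s)) ^ i *
          ((q + (1 - q) * (1 - z) * Real.exp (-th * s)) / (1 - (1 - q) * z)) ^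
            (lam / (th * (1 - q)))) t = _ := hT.deriv
    have hZd : deriv (fun w => (1 - (1 - w) * Real.exp (-th * t)) ^ i *
          ((q + (1 - q) * (1 - w) * Real.exp (-th * t)) / (1 - (1 - q) * w)) ^
            (lam / (th * (1 - q)))) z = _ := hZ.deriv
    rw [hTd, hZd]
    simp only [Pi.pow_apply, Pi.div_apply]
    have key : ((q + (1 - q) * (1 - z) * Real.exp (-th * t)) / (1 - (1 - q) * z)) ^
          (lam / (th * (1 - q))) =
        ((q + (1 - q) * (1 - z) * Real.exp (-th * t)) / (1 - (1 - q) * z)) ^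
          (lam / (th * (1 - q)) - 1) *
        ((q + (1 - q) * (1 - z) * Real.exp (-th * t)) / (1 - (1 - q) * z)) := by
      nth_rewrite 1 [show lam / (th * (1 - q)) = lam / (th * (1 - q)) - 1 + 1 by ring]
      exact Real.rpow_add_one hB.ne' _
    rw [key]
    generalize ((q + (1 - q) * (1 - z) * Real.exp (-th * t)) / (1 - (1 - q) * z)) ^
        (lam / (th * (1 - q)) - 1) = P
    have hth' := hth.ne'
    have h1q' := h1q.ne'
    have hD' := hD.ne'
    have hD'' : 1 - z * (1 - q) ≠ 0 := by rw [mul_comm]; exact hD.ne'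
    field_simp
    ring
end

section
/- Let λ > 0, μ > 0, θ > 0, let (g_n)_{n≥1} be nonnegative reals with Σ_{n≥1} g_n = 1, and let (π_n)_{n≥0} be a nonnegative summable sequence satisfying: 0 = −λπ_0 + (μ+θ)π_1, and for every n ≥ 1, 0 = −(λ+μ+nθ)π_n + (μ+(n+1)θ)π_{n+1} + λ Σ_{i=1}^{n} g_i π_{n−i}. Let Π(z) = Σ_{n=0}^∞ π_n z^n, G(z) = Σ_{n=1}^∞ g_n z^n and H(z) = (1−G(z))/(1−z). Then for every z ∈ (0,1), Π is differentiable at z and θ Π'(z) + (μ/z)(Π(z) − π_0) = λ H(z) Π(z). -/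
/-- In the Type-0 model of the best quote (limit orders at rate `λ`
with size distribution `(g_n)_{n≥1}`, unit-size market orders at rate `μ`, per-share
cancellation rate `θ`), a nonnegative summable solution `(π_n)` of the balance
equations has a generating function `Π(z) = Σ π_n z^n` which is differentiable on
`(0,1)` and satisfies `θΠ'(z) + (μ/z)(Π(z) - π_0) = λ H(z) Π(z)` with
`H(z) = (1-G(z))/(1-z)`. -/
theorem type0_generating_function_ode
    (lam mu th : ℝ) (hlam : 0 < lam) (hmu : 0 < mu) (hth : 0 < th)
    (g π : ℕ → ℝ) (hg0 : g 0 = 0) (hgnn : ∀ n, 0 ≤ g n) (hgsum : HasSum g 1)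
    (hπnn : ∀ n, 0 ≤ π n) (hπsum : Summable π)
    (hbal0 : 0 = -lam * π 0 + (mu + th) * π 1)
    (hbal : ∀ n : ℕ, 1 ≤ n →
      0 = -(lam + mu + (n : ℝ) * th) * π n + (mu + ((n : ℝ) + 1) * th) * π (n + 1) +
        lam * ∑ i ∈ Finset.Icc 1 n, g i * π (n - i)) :
    ∀ z ∈ Set.Ioo (0 : ℝ) 1,
      DifferentiableAt ℝ (fun w : ℝ => ∑' n : ℕ, π n * w ^ n) z ∧
        th * deriv (fun w : ℝ => ∑' n : ℕ, π n * w ^ n) z +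
            (mu / z) * ((∑' n : ℕ, π n * z ^ n) - π 0) =
          lam * ((1 - ∑' n : ℕ, g n * z ^ n) / (1 - z)) *
            ∑' n : ℕ, π n * z ^ n := by
  rintro z ⟨hz0, hz1⟩
  have hz0' : z ≠ 0 := ne_of_gt hz0
  have h1z : (1 : ℝ) - z ≠ 0 := by linarith
  -- a uniform bound on π
  have hC : ∀ n, π n ≤ ∑' m, π m := fun n => Summable.le_tsum hπsum n (fun j _ => hπnn j)
  set C : ℝ := ∑' m, π m with hCdef
  have hC0 : 0 ≤ C := le_trans (hπnn 0) (hC 0)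
  -- an intermediate radius r
  obtain ⟨r, hzr, hr1⟩ := exists_between hz1
  have hr0 : 0 < r := lt_trans hz0 hzr
  -- summable bound for derivatives
  have hu : Summable (fun n : ℕ => C * ((n : ℝ) * r ^ (n - 1))) := by
    apply Summable.mul_left
    rw [← summable_nat_add_iff 1]
    have h1 : Summable (fun n : ℕ => (n : ℝ) ^ 1 * r ^ n) :=
      summable_pow_mul_geometric_of_norm_lt_one 1
        (by rw [Real.norm_eq_abs, abs_of_pos hr0]; exact hr1)
    have h2 : Summable (fun n : ℕ => r ^ n) := summable_geometric_of_lt_one hr0.le hr1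
    refine (h1.add h2).congr fun n => ?_
    push_cast; ring
  -- summability of π n z^n
  have hPsum : Summable (fun n : ℕ => π n * z ^ n) := by
    refine Summable.of_nonneg_of_le (fun n => mul_nonneg (hπnn n) (pow_nonneg hz0.le n))
      (fun n => ?_) hπsum
    calc π n * z ^ n ≤ π n * 1 :=
          mul_le_mul_of_nonneg_left (pow_le_one₀ hz0.le hz1.le) (hπnn n)
      _ = π n := mul_one _
  have hGsummable : Summable g := hgsum.summable
  have hGsum : Summable (fun n : ℕ => g n * z ^ n) := by
    refine Summable.of_nonneg_of_le (fun n => mul_nonneg (hgnn n) (pow_nonneg hz0.le n))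
      (fun n => ?_) hGsummable
    calc g n * z ^ n ≤ g n * 1 :=
          mul_le_mul_of_nonneg_left (pow_le_one₀ hz0.le hz1.le) (hgnn n)
      _ = g n := mul_one _
  -- the derivative bound on Ioo (-r) r
  have hbound : ∀ (n : ℕ) (y : ℝ), y ∈ Set.Ioo (-r) r →
      ‖π n * ((n : ℝ) * y ^ (n - 1))‖ ≤ C * ((n : ℝ) * r ^ (n - 1)) := by
    rintro n y ⟨hy1, hy2⟩
    have hyr : |y| ≤ r := abs_le.2 ⟨hy1.le, hy2.le⟩
    rw [norm_mul, norm_mul, Real.norm_eq_abs, Real.norm_eq_abs, Real.norm_eq_abs,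
      abs_of_nonneg (hπnn n), Nat.abs_cast, abs_pow]
    refine mul_le_mul (hC n) ?_ (by positivity) hC0
    exact mul_le_mul_of_nonneg_left (pow_le_pow_left₀ (abs_nonneg y) hyr _) (Nat.cast_nonneg n)
  -- differentiability
  have hderiv : HasDerivAt (fun w : ℝ => ∑' n : ℕ, π n * w ^ n)
      (∑' n : ℕ, π n * ((n : ℝ) * z ^ (n - 1))) z := by
    refine hasDerivAt_tsum_of_isPreconnected hu isOpen_Ioo
      ((convex_Ioo _ _).isPreconnected) (fun n y _ => ?_) hbound
      (y₀ := z) ⟨by linarith, hzr⟩ hPsum ⟨by linarith, hzr⟩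
    exact (hasDerivAt_pow n y).const_mul (π n)
  refine ⟨hderiv.differentiableAt, ?_⟩
  rw [hderiv.deriv]
  set P : ℝ := ∑' n : ℕ, π n * z ^ n with hPdef
  set Gz : ℝ := ∑' n : ℕ, g n * z ^ n with hGdef
  set D : ℝ := ∑' n : ℕ, π n * ((n : ℝ) * z ^ (n - 1)) with hDdef
  -- summability of derivative series at z
  have hDsum : Summable (fun n : ℕ => π n * ((n : ℝ) * z ^ (n - 1))) :=
    Summable.of_norm_bounded hu (fun n => hbound n z ⟨by linarith, hzr⟩)
  have hPhas : HasSum (fun n : ℕ => π n * z ^ n) P := hPsum.hasSum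
  have hGhas : HasSum (fun n : ℕ => g n * z ^ n) Gz := hGsum.hasSum
  have hDhas : HasSum (fun n : ℕ => π n * ((n : ℝ) * z ^ (n - 1))) D := hDsum.hasSum
  clear_value P Gz D
  -- z * D : sum of π n * n * z^n
  have hzD : HasSum (fun n : ℕ => π n * (n : ℝ) * z ^ n) (z * D) := by
    refine (hDhas.mul_left z).congr_fun fun n => ?_
    cases n with
    | zero => simp
    | succ m => rw [Nat.add_sub_cancel]; push_cast; ring
  -- shifted sum
  have hf : HasSum (fun m : ℕ => (mu + (m : ℝ) * th) * π m * z ^ m)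
      (mu * P + th * (z * D)) :=
    ((hPhas.mul_left mu).add (hzD.mul_left th)).congr_fun fun m => by ring
  have hShift : HasSum (fun n : ℕ => (mu + ((n : ℝ) + 1) * th) * π (n + 1) * z ^ (n + 1))
      (mu * P + th * (z * D) - mu * π 0) := by
    have h0 : mu * P + th * (z * D) - mu * π 0 +
        ∑ i ∈ Finset.range 1, (mu + (i : ℝ) * th) * π i * z ^ i =
        mu * P + th * (z * D) := by simp
    rw [← h0] at hf
    refine ((hasSum_nat_add_iff (f := fun m : ℕ => (mu + (m : ℝ) * th) * π m * z ^ m) 1).mpr hf).congr_fun fun n => ?_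
    push_cast; ring
  -- Cauchy product
  have hConv : HasSum (fun n : ℕ => ∑ k ∈ Finset.range (n + 1),
      (g k * z ^ k) * (π (n - k) * z ^ (n - k))) (Gz * P) := by
    have h := hasSum_sum_range_mul_of_summable_norm
      (f := fun k : ℕ => g k * z ^ k) (g := fun k : ℕ => π k * z ^ k) ?_ ?_
    · rw [hGdef, hPdef]; exact h
    · refine hGsum.congr fun n => ?_
      rw [Real.norm_eq_abs, abs_of_nonneg (mul_nonneg (hgnn n) (pow_nonneg hz0.le n))]
    · refine hPsum.congr fun n => ?_
      rw [Real.norm_eq_abs, abs_of_nonneg (mul_nonneg (hπnn n) (pow_nonneg hz0.le n))]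
  have hConv' : HasSum (fun n : ℕ => z ^ n * ∑ i ∈ Finset.Icc 1 n, g i * π (n - i)) (Gz * P) := by
    refine hConv.congr_fun fun n => ?_
    have hins : Finset.range (n + 1) = insert 0 (Finset.Icc 1 n) := by
      ext k; simp only [Finset.mem_range, Finset.mem_insert, Finset.mem_Icc]; omega
    rw [hins, Finset.sum_insert (by simp), hg0, Finset.mul_sum]
    simp only [zero_mul, zero_add]
    refine Finset.sum_congr rfl fun k hk => ?_
    obtain ⟨hk1, hk2⟩ := Finset.mem_Icc.mp hk
    have hzz : z ^ k * z ^ (n - k) = z ^ n := by rw [← pow_add, Nat.add_sub_cancel' hk2]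
    rw [show z ^ n * (g k * π (n - k)) = (z ^ k * z ^ (n - k)) * (g k * π (n - k)) from by
      rw [hzz]]
    ring
  -- the balance series
  set E : ℕ → ℝ := fun n =>
    (-(lam + mu + (n : ℝ) * th) * π n + (mu + ((n : ℝ) + 1) * th) * π (n + 1) +
      lam * ∑ i ∈ Finset.Icc 1 n, g i * π (n - i)) * z ^ n with hEdef
  clear_value E
  have hE0 : E 0 = -(mu * π 0) := by
    simp only [hEdef, Nat.cast_zero, pow_zero, mul_one]
    have : Finset.Icc 1 0 = (∅ : Finset ℕ) := by decide
    rw [this]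
    simp only [Finset.sum_empty, mul_zero]
    linarith
  have hEn : ∀ n : ℕ, n ≠ 0 → E n = 0 := by
    intro n hn
    have h := hbal n (Nat.one_le_iff_ne_zero.2 hn)
    simp only [hEdef]
    rw [← h, zero_mul]
  have hEz : HasSum (fun n : ℕ => z * E n) (z * -(mu * π 0)) := by
    have := hasSum_single (f := E) 0 hEn
    rw [hE0] at this
    exact this.mul_left z
  have hT : HasSum (fun n : ℕ =>
      z * (-(lam + mu) * (π n * z ^ n)) + z * (-th * (π n * (n : ℝ) * z ^ n)) +
        (mu + ((n : ℝ) + 1) * th) * π (n + 1) * z ^ (n + 1) +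
        (lam * z) * (z ^ n * ∑ i ∈ Finset.Icc 1 n, g i * π (n - i)))
      (z * (-(lam + mu) * P) + z * (-th * (z * D)) +
        (mu * P + th * (z * D) - mu * π 0) + (lam * z) * (Gz * P)) :=
    ((((hPhas.mul_left (-(lam + mu))).mul_left z).add
      ((hzD.mul_left (-th)).mul_left z)).add hShift).add (hConv'.mul_left (lam * z))
  have key : z * -(mu * π 0) =
      z * (-(lam + mu) * P) + z * (-th * (z * D)) +
        (mu * P + th * (z * D) - mu * π 0) + (lam * z) * (Gz * P) := by
    refine HasSum.unique hEz (hT.congr_fun fun n => ?_)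
    simp only [hEdef]
    ring
  have key2 : th * D * z * (1 - z) + mu * (1 - z) * (P - π 0) = lam * (1 - Gz) * z * P := by
    linarith [key]
  field_simp
  linear_combination key2
end

section
/- Let λ > 0, μ > 0, θ > 0, let (g_n)_{n≥1} be nonnegative reals with Σ_{n≥1} g_n = 1 such that H(z) = (1−G(z))/(1−z), with G(z) = Σ g_n z^n, satisfies ∫_0^1 H(v) dv < ∞. Let (π_n)_{n≥0} be a nonnegative sequence with Σ_{n≥0} π_n = 1 satisfying: 0 = −λπ_0 + (μ+θ)π_1, and for n ≥ 1, 0 = −(λ+μ+nθ)π_n + (μ+(n+1)θ)π_{n+1} + λ Σ_{i=1}^{n} g_i π_{n−i}. Then π_0 = [ (μ/θ) ∫_0^1 u^{μ/θ − 1} exp( (λ/θ) ∫_u^1 H(v) dv ) du ]^{−1}. -/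
open MeasureTheory Filter Set intervalIntegral Finset

namespace Type0Aux


lemma summable_pgf {c : ℕ → ℝ} (hc1 : ∀ n, |c n| ≤ 1) {z : ℝ} (hz : |z| < 1) :
    Summable fun n => c n * z ^ n := by
  apply Summable.of_norm_bounded (summable_geometric_of_lt_one (abs_nonneg z) hz)
  intro n
  rw [norm_mul, norm_pow, Real.norm_eq_abs, Real.norm_eq_abs]
  calc |c n| * |z| ^ n ≤ 1 * |z| ^ n := by gcongr; exact hc1 n
  _ = |z| ^ n := one_mul _

lemma deriv_bound {c : ℕ → ℝ} (hc1 : ∀ n, |c n| ≤ 1) {y r : ℝ} (hr0 : 0 < r) (hy : |y| ≤ r)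
    (n : ℕ) : ‖c n * ((n : ℝ) * y ^ (n - 1))‖ ≤ (n : ℝ) * r ^ n / r := by
  rcases n with _ | m
  · simp
  · have h2 : ((m + 1 : ℕ) : ℝ) * r ^ (m + 1) / r = ((m + 1 : ℕ) : ℝ) * r ^ m := by
      rw [pow_succ]; field_simp
    rw [h2]
    have h1 : ‖c (m + 1) * (((m + 1 : ℕ) : ℝ) * y ^ (m + 1 - 1))‖
        ≤ 1 * (((m + 1 : ℕ) : ℝ) * r ^ m) := by
      simp only [Nat.add_sub_cancel, norm_mul, norm_pow, Real.norm_eq_abs]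
      have hb : |((m + 1 : ℕ) : ℝ)| = ((m + 1 : ℕ) : ℝ) := abs_of_nonneg (by positivity)
      rw [hb]
      have : |y| ^ m ≤ r ^ m := pow_le_pow_left₀ (abs_nonneg y) hy m
      have h3 : |c (m+1)| * (((m + 1 : ℕ) : ℝ) * |y| ^ m) ≤ 1 * (((m + 1 : ℕ) : ℝ) * r ^ m) := by
        apply mul_le_mul (hc1 _) _ (by positivity) zero_le_one
        apply mul_le_mul_of_nonneg_left this (by positivity)
      linarith
    simpa using h1

lemma summable_deriv_bound {r : ℝ} (hr0 : 0 < r) (hr1 : r < 1) :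
    Summable (fun n : ℕ => (n : ℝ) * r ^ n / r) := by
  have := summable_pow_mul_geometric_of_norm_lt_one (R := ℝ) 1
    (by rw [Real.norm_eq_abs, abs_of_pos hr0]; exact hr1)
  exact (this.div_const r).congr (fun n => by rw [pow_one])

lemma summable_pgf_deriv {c : ℕ → ℝ} (hc1 : ∀ n, |c n| ≤ 1) {z : ℝ} (hz : |z| < 1) :
    Summable fun n => c n * ((n : ℝ) * z ^ (n - 1)) := by
  set r := (|z| + 1) / 2 with hrdef
  have hr0 : 0 < r := by positivity
  have hzr : |z| < r := by rw [hrdef]; linarith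
  have hr1 : r < 1 := by rw [hrdef]; linarith
  exact Summable.of_norm_bounded (summable_deriv_bound hr0 hr1)
    (fun n => deriv_bound hc1 hr0 hzr.le n)

lemma hasDerivAt_pgf {c : ℕ → ℝ} (hc1 : ∀ n, |c n| ≤ 1) {z : ℝ} (hz : |z| < 1) :
    HasDerivAt (fun x => ∑' n, c n * x ^ n) (∑' n, c n * ((n : ℝ) * z ^ (n - 1))) z := by
  set r := (|z| + 1) / 2 with hrdef
  have hr0 : 0 < r := by positivity
  have hzr : |z| < r := by rw [hrdef]; linarith
  have hr1 : r < 1 := by rw [hrdef]; linarith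
  exact hasDerivAt_tsum_of_isPreconnected (summable_deriv_bound hr0 hr1)
    isOpen_Ioo (convex_Ioo (-r) r).isPreconnected
    (fun n y _ => (hasDerivAt_pow n y).const_mul (c n))
    (fun n y hy => deriv_bound hc1 hr0 (abs_lt.2 ⟨hy.1, hy.2⟩).le n)
    (show (0 : ℝ) ∈ Ioo (-r) r from ⟨by linarith, hr0⟩)
    (summable_pgf hc1 (by simp))
    (show z ∈ Ioo (-r) r from ⟨(abs_lt.1 hzr).1, (abs_lt.1 hzr).2⟩)

lemma shift_eq {c : ℕ → ℝ} (hc1 : ∀ n, |c n| ≤ 1) {z : ℝ} (hz : |z| < 1) :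
    z * ∑' n, c (n + 1) * z ^ n = (∑' n, c n * z ^ n) - c 0 := by
  have hs := summable_pgf hc1 hz
  have h1 : ∑' n, c (n + 1) * z ^ (n + 1) = z * ∑' n, c (n + 1) * z ^ n := by
    rw [← tsum_mul_left]; exact tsum_congr fun n => by ring
  rw [hs.tsum_eq_zero_add, h1]; ring

lemma key_ode (lam mu th : ℝ)
    (g : ℕ → ℝ) (hg0 : g 0 = 0) (hgnn : ∀ n, 0 ≤ g n) (hgsum : HasSum g 1)
    (π : ℕ → ℝ) (hπnn : ∀ n, 0 ≤ π n) (hπsum : HasSum π 1)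
    (hbal0 : 0 = -lam * π 0 + (mu + th) * π 1)
    (hbal : ∀ n : ℕ, 1 ≤ n →
      0 = -(lam + mu + (n : ℝ) * th) * π n + (mu + ((n : ℝ) + 1) * th) * π (n + 1) +
        lam * ∑ i ∈ Finset.Icc 1 n, g i * π (n - i))
    {z : ℝ} (hz0 : 0 < z) (hz1 : z < 1) :
    th * (∑' n, π n * ((n : ℝ) * z ^ (n - 1)))
      = lam * ((1 - ∑' n, g n * z ^ n) / (1 - z)) * (∑' n, π n * z ^ n)
        - mu * (∑' n, π (n + 1) * z ^ n) := by
  have hzabs : |z| < 1 := by rw [abs_of_pos hz0]; exact hz1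
  have hπ1 : ∀ n, |π n| ≤ 1 := fun n => by
    rw [abs_of_nonneg (hπnn n)]; exact le_hasSum hπsum n fun m _ => hπnn m
  have hg1 : ∀ n, |g n| ≤ 1 := fun n => by
    rw [abs_of_nonneg (hgnn n)]; exact le_hasSum hgsum n fun m _ => hgnn m
  set P := ∑' n, π n * z ^ n with hP
  set Pd := ∑' n, π n * ((n : ℝ) * z ^ (n - 1)) with hPdef
  set Q := ∑' n, π (n + 1) * z ^ n with hQdef
  set Gg := ∑' n, g n * z ^ n with hGdef
  have sP : Summable fun n => π n * z ^ n := summable_pgf hπ1 hzabs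
  have sPd : Summable fun n => π n * ((n : ℝ) * z ^ (n - 1)) := summable_pgf_deriv hπ1 hzabs
  have sG : Summable fun n => g n * z ^ n := summable_pgf hg1 hzabs
  have sgeom : Summable fun n : ℕ => |z| ^ n := summable_geometric_of_lt_one (abs_nonneg z) hzabs
  have sQ : Summable fun n => π (n + 1) * z ^ n := by
    apply Summable.of_norm_bounded sgeom
    intro n
    rw [norm_mul, norm_pow, Real.norm_eq_abs, Real.norm_eq_abs]
    calc |π (n + 1)| * |z| ^ n ≤ 1 * |z| ^ n := by gcongr; exact hπ1 _
    _ = |z| ^ n := one_mul _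
  have sPd1 : Summable fun n => π (n + 1) * (((n : ℝ) + 1) * z ^ n) := by
    have := (summable_nat_add_iff 1).2 sPd
    exact this.congr fun n => by push_cast [Nat.add_sub_cancel]; ring
  have sConv : Summable fun n => (∑ i ∈ Finset.Icc 1 n, g i * π (n - i)) * z ^ n := by
    apply Summable.of_norm_bounded sgeom
    intro n
    rw [norm_mul, norm_pow, Real.norm_eq_abs, Real.norm_eq_abs]
    have h1 : |∑ i ∈ Finset.Icc 1 n, g i * π (n - i)| ≤ 1 := by
      rw [abs_of_nonneg (Finset.sum_nonneg fun i _ => mul_nonneg (hgnn i) (hπnn _))]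
      calc ∑ i ∈ Finset.Icc 1 n, g i * π (n - i) ≤ ∑ i ∈ Finset.Icc 1 n, g i := by
            apply Finset.sum_le_sum; intro i _
            calc g i * π (n - i) ≤ g i * 1 := by
                  apply mul_le_mul_of_nonneg_left _ (hgnn i)
                  exact (abs_le.1 (hπ1 _)).2
            _ = g i := mul_one _
      _ ≤ 1 := sum_le_hasSum _ (fun i _ => hgnn i) hgsum
    calc |∑ i ∈ Finset.Icc 1 n, g i * π (n - i)| * |z| ^ n ≤ 1 * |z| ^ n := by gcongr
    _ = |z| ^ n := one_mul _
  -- pointwise identity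
  have hpt : ∀ n : ℕ,
      lam * (π n * z ^ n) + mu * (π n * z ^ n) + (th * z) * (π n * ((n : ℝ) * z ^ (n - 1)))
        = mu * (π (n + 1) * z ^ n) + th * (π (n + 1) * (((n : ℝ) + 1) * z ^ n))
          + lam * ((∑ i ∈ Finset.Icc 1 n, g i * π (n - i)) * z ^ n)
          + (if n = 0 then mu * π 0 else 0) := by
    intro n
    rcases n with _ | m
    · simp only [Nat.cast_zero, pow_zero, if_pos rfl, Finset.Icc_self,
        Finset.Icc_eq_empty_of_lt (by norm_num : (1:ℕ) > 0), Finset.sum_empty]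
      push_cast
      ring_nf
      linear_combination hbal0
    · have hb := hbal (m + 1) (Nat.le_add_left 1 m)
      simp only [if_neg (Nat.succ_ne_zero m), add_zero]
      push_cast at hb ⊢
      linear_combination (z ^ (m + 1)) * hb
  have hL : HasSum
      (fun n => lam * (π n * z ^ n) + mu * (π n * z ^ n)
        + (th * z) * (π n * ((n : ℝ) * z ^ (n - 1))))
      (lam * P + mu * P + (th * z) * Pd) :=
    ((sP.hasSum.mul_left lam).add (sP.hasSum.mul_left mu)).add (sPd.hasSum.mul_left (th * z))
  have hR : HasSum
      (fun n => mu * (π (n + 1) * z ^ n) + th * (π (n + 1) * (((n : ℝ) + 1) * z ^ n))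
        + lam * ((∑ i ∈ Finset.Icc 1 n, g i * π (n - i)) * z ^ n)
        + (if n = 0 then mu * π 0 else 0))
      (mu * Q + th * (∑' n, π (n + 1) * (((n : ℝ) + 1) * z ^ n))
        + lam * (∑' n, (∑ i ∈ Finset.Icc 1 n, g i * π (n - i)) * z ^ n)
        + mu * π 0) :=
    (((sQ.hasSum.mul_left mu).add (sPd1.hasSum.mul_left th)).add
      (sConv.hasSum.mul_left lam)).add (hasSum_ite_eq 0 (mu * π 0))
  have hLR := hL.unique ((funext hpt).symm ▸ hR)
  -- shifted derivative series equals Pd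
  have hPdshift : (∑' n, π (n + 1) * (((n : ℝ) + 1) * z ^ n)) = Pd := by
    have h := sPd.tsum_eq_zero_add
    simp only [Nat.cast_zero, zero_mul, mul_zero, zero_add, Nat.add_sub_cancel,
      Nat.cast_add, Nat.cast_one] at h
    exact h.symm
  -- Cauchy product
  have hconv : (∑' n, (∑ i ∈ Finset.Icc 1 n, g i * π (n - i)) * z ^ n) = Gg * P := by
    rw [hGdef, hP, tsum_mul_tsum_eq_tsum_sum_antidiagonal_of_summable_norm
      (sG.abs.congr fun n => (Real.norm_eq_abs _).symm)
      (sP.abs.congr fun n => (Real.norm_eq_abs _).symm)]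
    apply tsum_congr; intro n
    rw [Finset.Nat.sum_antidiagonal_eq_sum_range_succ_mk, Finset.sum_range_succ']
    simp only [hg0, zero_mul, add_zero, Nat.sub_zero]
    rw [Finset.sum_mul, ← Finset.Ico_add_one_right_eq_Icc, Finset.sum_Ico_eq_sum_range]
    apply Finset.sum_congr rfl
    intro k hk
    have hk' : k + 1 ≤ n := Nat.succ_le_of_lt (Finset.mem_range.1 hk)
    have hzz : z ^ (k + 1) * z ^ (n - (k + 1)) = z ^ n := by
      rw [← pow_add, Nat.add_sub_cancel' hk']
    rw [add_comm 1 k]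
    calc g (k + 1) * π (n - (k + 1)) * z ^ n
        = g (k + 1) * π (n - (k + 1)) * (z ^ (k + 1) * z ^ (n - (k + 1))) := by rw [hzz]
    _ = g (k + 1) * z ^ (k + 1) * (π (n - (k + 1)) * z ^ (n - (k + 1))) := by ring
  rw [hPdshift, hconv] at hLR
  have hzq : z * Q = P - π 0 := shift_eq hπ1 hzabs
  have h1z : (1 : ℝ) - z ≠ 0 := by linarith
  have h2 : th * Pd * (1 - z) = lam * (1 - Gg) * P - mu * (1 - z) * Q := by
    linear_combination -hLR - mu * hzq
  have h3 : th * Pd = (lam * (1 - Gg) * P - mu * (1 - z) * Q) / (1 - z) := by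
    rw [eq_div_iff h1z]; linear_combination h2
  rw [h3]
  field_simp


lemma pi0_pos (lam mu th : ℝ) (hlam : 0 < lam) (hmu : 0 < mu) (hth : 0 < th)
    (g : ℕ → ℝ) (π : ℕ → ℝ) (hπnn : ∀ n, 0 ≤ π n) (hπsum : HasSum π 1)
    (hbal0 : 0 = -lam * π 0 + (mu + th) * π 1)
    (hbal : ∀ n : ℕ, 1 ≤ n →
      0 = -(lam + mu + (n : ℝ) * th) * π n + (mu + ((n : ℝ) + 1) * th) * π (n + 1) +
        lam * ∑ i ∈ Finset.Icc 1 n, g i * π (n - i)) :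
    0 < π 0 := by
  rcases (hπnn 0).lt_or_eq with h | h
  · exact h
  exfalso
  have hz : ∀ n, π n = 0 := by
    intro n
    induction n using Nat.strong_induction_on with
    | _ n ih =>
      match n with
      | 0 => exact h.symm
      | 1 =>
        have h0 : π 0 = 0 := h.symm
        have hmt : (0:ℝ) < mu + th := by linarith
        nlinarith [hπnn 1]
      | (m + 2) =>
        have hb := hbal (m + 1) (Nat.le_add_left 1 m)
        have hpm : π (m + 1) = 0 := ih (m + 1) (by omega)
        have hsum0 : ∑ i ∈ Finset.Icc 1 (m + 1), g i * π (m + 1 - i) = 0 := by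
          apply Finset.sum_eq_zero
          intro i _
          rw [ih (m + 1 - i) (by omega), mul_zero]
        rw [hpm, hsum0, mul_zero, zero_add, mul_zero, add_zero] at hb
        have hc2 : (0:ℝ) < mu + (((m + 1 : ℕ) : ℝ) + 1) * th := by positivity
        exact (mul_eq_zero.mp hb.symm).resolve_left hc2.ne'
  have h10 : (1:ℝ) = 0 := hπsum.unique ((funext hz : π = fun _ => 0).symm ▸ hasSum_zero)
  exact one_ne_zero h10

end Type0Aux

/-- In the Type-0 model of the best quote, if
`H(z) = (1-G(z))/(1-z)` is integrable on `(0,1)` and `(π_n)` is a stationary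
probability distribution (nonnegative, summing to 1, satisfying the balance
equations), then
`π_0 = [ (μ/θ) ∫_0^1 u^{μ/θ-1} exp((λ/θ) ∫_u^1 H(v) dv) du ]⁻¹`. -/
theorem type0_pi_zero_formula
    (lam mu th : ℝ) (hlam : 0 < lam) (hmu : 0 < mu) (hth : 0 < th)
    (g : ℕ → ℝ) (hg0 : g 0 = 0) (hgnn : ∀ n, 0 ≤ g n) (hgsum : HasSum g 1)
    (hH : MeasureTheory.IntegrableOn
      (fun v : ℝ => (1 - ∑' n : ℕ, g n * v ^ n) / (1 - v)) (Set.Ioo 0 1))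
    (π : ℕ → ℝ) (hπnn : ∀ n, 0 ≤ π n) (hπsum : HasSum π 1)
    (hbal0 : 0 = -lam * π 0 + (mu + th) * π 1)
    (hbal : ∀ n : ℕ, 1 ≤ n →
      0 = -(lam + mu + (n : ℝ) * th) * π n + (mu + ((n : ℝ) + 1) * th) * π (n + 1) +
        lam * ∑ i ∈ Finset.Icc 1 n, g i * π (n - i)) :
    π 0 = ((mu / th) *
        ∫ u in (0:ℝ)..1,
          u ^ (mu / th - 1) *
            Real.exp ((lam / th) *
              ∫ v in u..1, (1 - ∑' n : ℕ, g n * v ^ n) / (1 - v)))⁻¹ := by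
  classical
  open MeasureTheory Filter Set intervalIntegral Type0Aux in
  have hπ0 : 0 < π 0 := Type0Aux.pi0_pos lam mu th hlam hmu hth g π hπnn hπsum hbal0 hbal
  have hπ1 : ∀ n, |π n| ≤ 1 := fun n => by
    rw [abs_of_nonneg (hπnn n)]; exact le_hasSum hπsum n fun m _ => hπnn m
  have hg1 : ∀ n, |g n| ≤ 1 := fun n => by
    rw [abs_of_nonneg (hgnn n)]; exact le_hasSum hgsum n fun m _ => hgnn m
  have hp : 0 < mu / th := div_pos hmu hth
  set Hf : ℝ → ℝ := fun v : ℝ => (1 - ∑' n : ℕ, g n * v ^ n) / (1 - v) with hHfdef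
  set P : ℝ → ℝ := fun x => ∑' n : ℕ, π n * x ^ n with hPdef
  set J : ℝ → ℝ := fun x => ∫ v in (0:ℝ)..x, Hf v with hJdef
  set E : ℝ → ℝ := fun x => Real.exp (-(lam / th) * J x) with hEdef
  set Φ : ℝ → ℝ := fun x => x ^ (mu / th) * E x * P x with hΦdef
  set φ : ℝ → ℝ := fun x => mu * π 0 / th * (x ^ (mu / th - 1) * E x) with hφdef
  -- basic bounds
  have hP_nonneg : ∀ x : ℝ, 0 ≤ x → 0 ≤ P x := fun x hx =>
    tsum_nonneg fun n => mul_nonneg (hπnn n) (pow_nonneg hx n)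
  have hP_le : ∀ x : ℝ, 0 ≤ x → x < 1 → P x ≤ 1 := by
    intro x hx0 hx1
    have := Summable.tsum_le_tsum (f := fun n => π n * x ^ n) (g := π)
      (fun n => by
        calc π n * x ^ n ≤ π n * 1 :=
              mul_le_mul_of_nonneg_left (pow_le_one₀ hx0 hx1.le) (hπnn n)
        _ = π n := mul_one _)
      (Type0Aux.summable_pgf hπ1 (by rw [abs_of_nonneg hx0]; exact hx1)) hπsum.summable
    rwa [hπsum.tsum_eq] at this
  have hG_le : ∀ x : ℝ, 0 ≤ x → x < 1 → (∑' n : ℕ, g n * x ^ n) ≤ 1 := by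
    intro x hx0 hx1
    have := Summable.tsum_le_tsum (f := fun n => g n * x ^ n) (g := g)
      (fun n => by
        calc g n * x ^ n ≤ g n * 1 :=
              mul_le_mul_of_nonneg_left (pow_le_one₀ hx0 hx1.le) (hgnn n)
        _ = g n := mul_one _)
      (Type0Aux.summable_pgf hg1 (by rw [abs_of_nonneg hx0]; exact hx1)) hgsum.summable
    rwa [hgsum.tsum_eq] at this
  have hHf_nonneg : ∀ v ∈ Set.Icc (0:ℝ) 1, 0 ≤ Hf v := by
    intro v hv
    rcases eq_or_lt_of_le hv.2 with h1 | h1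
    · rw [hHfdef]; simp only [h1, sub_self, div_zero]; exact le_rfl
    · exact div_nonneg (by linarith [hG_le v hv.1 h1]) (by linarith)
  have hHf_cont : ContinuousOn Hf (Set.Ioo 0 1) := by
    intro v hv
    have hva : |v| < 1 := by rw [abs_of_pos hv.1]; exact hv.2
    have hGc : ContinuousAt (fun x : ℝ => ∑' n : ℕ, g n * x ^ n) v :=
      (Type0Aux.hasDerivAt_pgf hg1 hva).continuousAt
    exact ((continuousAt_const.sub hGc).div
      (continuousAt_const.sub continuousAt_id) (by simp; linarith [hv.2])).continuousWithinAt
  have hIcc_int : MeasureTheory.IntegrableOn Hf (Set.Icc 0 1) :=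
    hH.congr_set_ae (Filter.EventuallyEq.symm MeasureTheory.Ioo_ae_eq_Icc)
  have hJI : ∀ x : ℝ, 0 ≤ x → x ≤ 1 → IntervalIntegrable Hf MeasureTheory.volume 0 x := by
    intro x hx0 hx1
    rw [intervalIntegrable_iff_integrableOn_Ioc_of_le hx0]
    exact hIcc_int.mono_set fun y hy => ⟨hy.1.le, hy.2.trans hx1⟩
  have hJI2 : ∀ x : ℝ, 0 ≤ x → x ≤ 1 → IntervalIntegrable Hf MeasureTheory.volume x 1 := by
    intro x hx0 hx1
    rw [intervalIntegrable_iff_integrableOn_Ioc_of_le hx1]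
    exact hIcc_int.mono_set fun y hy => ⟨hx0.trans hy.1.le, hy.2⟩
  have hJcont : ContinuousOn J (Set.Icc 0 1) := by
    have := intervalIntegral.continuousOn_primitive_interval
      (a := 0) (b := 1) (μ := MeasureTheory.volume) (f := Hf)
      (by rwa [Set.uIcc_of_le zero_le_one])
    rwa [Set.uIcc_of_le zero_le_one] at this
  have hJderiv : ∀ x ∈ Set.Ioo (0:ℝ) 1, HasDerivAt J (Hf x) x := by
    intro x hx
    exact intervalIntegral.integral_hasDerivAt_right (hJI x hx.1.le hx.2.le)
      (hHf_cont.stronglyMeasurableAtFilter isOpen_Ioo x hx)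
      (hHf_cont.continuousAt (Ioo_mem_nhds hx.1 hx.2))
  have hJ0 : ∀ x ∈ Set.Icc (0:ℝ) 1, 0 ≤ J x := by
    intro x hx
    exact intervalIntegral.integral_nonneg hx.1
      (fun u hu => hHf_nonneg u ⟨hu.1, hu.2.trans hx.2⟩)
  have hE_pos : ∀ x : ℝ, 0 < E x := fun x => Real.exp_pos _
  have hE_le : ∀ x ∈ Set.Icc (0:ℝ) 1, E x ≤ 1 := by
    intro x hx
    rw [hEdef]
    apply Real.exp_le_one_iff.2
    have := mul_nonneg (le_of_lt (div_pos hlam hth)) (hJ0 x hx)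
    linarith
  have hΦderiv : ∀ x ∈ Set.Ioo (0:ℝ) 1, HasDerivAt Φ (φ x) x := by
    intro x hx
    have hx0 : 0 < x := hx.1
    have hxa : |x| < 1 := by rw [abs_of_pos hx0]; exact hx.2
    have h1 : HasDerivAt (fun y : ℝ => y ^ (mu / th)) (mu / th * x ^ (mu / th - 1)) x :=
      Real.hasDerivAt_rpow_const (Or.inl hx0.ne')
    have h2 : HasDerivAt E (E x * (-(lam / th) * Hf x)) x :=
      ((hJderiv x hx).const_mul (-(lam / th))).exp
    have h3 : HasDerivAt P (∑' n : ℕ, π n * ((n : ℝ) * x ^ (n - 1))) x :=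
      Type0Aux.hasDerivAt_pgf hπ1 hxa
    have h4 := (h1.mul h2).mul h3
    refine h4.congr_deriv (Eq.symm ?_); simp only [Pi.mul_apply]
    have hPx : P x = ∑' n : ℕ, π n * x ^ n := rfl
    have hHfx : Hf x = (1 - ∑' n : ℕ, g n * x ^ n) / (1 - x) := rfl
    have hkey := Type0Aux.key_ode lam mu th g hg0 hgnn hgsum π hπnn hπsum hbal0 hbal hx0 hx.2
    rw [← hHfx, ← hPx] at hkey
    have hq := Type0Aux.shift_eq hπ1 hxa
    rw [← hPx] at hq
    have hTPd : (∑' n : ℕ, π n * ((n : ℝ) * x ^ (n - 1)))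
        = (lam * Hf x * P x - mu * ∑' n : ℕ, π (n + 1) * x ^ n) / th := by
      rw [eq_div_iff hth.ne']; linear_combination hkey
    have hTQ : (∑' n : ℕ, π (n + 1) * x ^ n) = (P x - π 0) / x := by
      rw [eq_div_iff hx0.ne']; linear_combination hq
    have hxp : x ^ (mu / th) = x ^ (mu / th - 1) * x := by
      rw [← Real.rpow_add_one hx0.ne' (mu / th - 1)]; ring_nf
    rw [hTPd, hTQ, hxp]
    simp only [hφdef]
    field_simp
    ring
  have hφcont : ContinuousOn φ (Set.Ioo 0 1) := by
    apply ContinuousOn.mul continuousOn_const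
    apply ContinuousOn.mul
    · intro x hx
      exact (Real.continuousAt_rpow_const x (mu / th - 1) (Or.inl hx.1.ne')).continuousWithinAt
    · rw [hEdef]
      exact Real.continuous_exp.comp_continuousOn
        (continuousOn_const.mul (hJcont.mono Set.Ioo_subset_Icc_self))
  have hFTC : ∀ a b : ℝ, a ∈ Set.Ioo (0:ℝ) 1 → b ∈ Set.Ioo (0:ℝ) 1 → a ≤ b →
      (∫ x in Set.Icc a b, φ x) = Φ b - Φ a := by
    intro a b ha hb hab
    have hsub : Set.Icc a b ⊆ Set.Ioo 0 1 := fun y hy =>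
      ⟨lt_of_lt_of_le ha.1 hy.1, lt_of_le_of_lt hy.2 hb.2⟩
    have huIcc : Set.uIcc a b = Set.Icc a b := Set.uIcc_of_le hab
    have h1 : (∫ x in a..b, φ x) = Φ b - Φ a := by
      apply intervalIntegral.integral_eq_sub_of_hasDerivAt
      · intro x hxm
        exact hΦderiv x (hsub (huIcc ▸ hxm))
      · exact (hφcont.mono (huIcc ▸ hsub : Set.uIcc a b ⊆ Set.Ioo 0 1)).intervalIntegrable
    rw [MeasureTheory.integral_Icc_eq_integral_Ioc, ← intervalIntegral.integral_of_le hab, h1]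
  have hrint : MeasureTheory.IntegrableOn (fun x : ℝ => x ^ (mu / th - 1)) (Set.Ioo 0 1) := by
    have h := intervalIntegral.intervalIntegrable_rpow' (a := (0:ℝ)) (b := 1)
      (by linarith : (-1 : ℝ) < mu / th - 1)
    rw [intervalIntegrable_iff_integrableOn_Ioc_of_le zero_le_one] at h
    exact h.mono_set Set.Ioo_subset_Ioc_self
  have hφint : MeasureTheory.IntegrableOn φ (Set.Ioo 0 1) := by
    apply MeasureTheory.Integrable.mono' (hrint.const_mul (mu * π 0 / th))
    · exact hφcont.aestronglyMeasurable measurableSet_Ioo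
    · rw [MeasureTheory.ae_restrict_iff' measurableSet_Ioo]
      refine MeasureTheory.ae_of_all _ fun x hx => ?_
      have hr0 : (0:ℝ) ≤ x ^ (mu / th - 1) := Real.rpow_nonneg hx.1.le _
      have hE1 := hE_le x (Set.Ioo_subset_Icc_self hx)
      have hE0 := hE_pos x
      rw [Real.norm_eq_abs, hφdef, abs_of_nonneg (by positivity)]
      have : x ^ (mu / th - 1) * E x ≤ x ^ (mu / th - 1) * 1 := by
        apply mul_le_mul_of_nonneg_left hE1 hr0
      calc mu * π 0 / th * (x ^ (mu / th - 1) * E x)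
          ≤ mu * π 0 / th * (x ^ (mu / th - 1) * 1) := by
            apply mul_le_mul_of_nonneg_left this (by positivity)
      _ = mu * π 0 / th * x ^ (mu / th - 1) := by ring
  -- limits of Φ at the endpoints
  have hA : Filter.Tendsto Φ (nhdsWithin 1 (Set.Ioo (0:ℝ) 1))
      (nhds (Real.exp (-(lam / th) * J 1))) := by
    have l1 : nhdsWithin (1:ℝ) (Set.Ioo (0:ℝ) 1) ≤ nhdsWithin 1 (Set.Iio 1) :=
      nhdsWithin_mono _ Set.Ioo_subset_Iio_self
    have l2 : nhdsWithin (1:ℝ) (Set.Ioo (0:ℝ) 1) ≤ nhdsWithin 1 (Set.Icc 0 1) :=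
      nhdsWithin_mono _ Set.Ioo_subset_Icc_self
    have t1 : Filter.Tendsto (fun x : ℝ => x ^ (mu / th)) (nhdsWithin 1 (Set.Ioo (0:ℝ) 1))
        (nhds 1) := by
      have c := (Real.continuousAt_rpow_const 1 (mu / th) (Or.inl one_ne_zero)).tendsto
      rw [Real.one_rpow] at c
      exact c.mono_left nhdsWithin_le_nhds
    have t2 : Filter.Tendsto E (nhdsWithin 1 (Set.Ioo (0:ℝ) 1))
        (nhds (Real.exp (-(lam / th) * J 1))) := by
      have cJ : Filter.Tendsto J (nhdsWithin 1 (Set.Icc (0:ℝ) 1)) (nhds (J 1)) :=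
        hJcont 1 (Set.right_mem_Icc.2 zero_le_one)
      exact (Real.continuous_exp.tendsto _).comp
        ((tendsto_const_nhds (x := -(lam/th))).mul (cJ.mono_left l2))
    have t3 : Filter.Tendsto P (nhdsWithin 1 (Set.Ioo (0:ℝ) 1)) (nhds 1) :=
      (Real.tendsto_tsum_powerSeries_nhdsWithin_lt hπsum.tendsto_sum_nat).mono_left l1
    have := (t1.mul t2).mul t3
    simpa using this
  have hB : Filter.Tendsto Φ (nhdsWithin 0 (Set.Ioo (0:ℝ) 1)) (nhds 0) := by
    have trp : Filter.Tendsto (fun x : ℝ => x ^ (mu / th)) (nhdsWithin 0 (Set.Ioo (0:ℝ) 1))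
        (nhds 0) := by
      have c := (Real.continuousAt_rpow_const 0 (mu / th) (Or.inr hp.le)).tendsto
      rw [Real.zero_rpow hp.ne'] at c
      exact c.mono_left nhdsWithin_le_nhds
    apply squeeze_zero'
      (eventually_nhdsWithin_of_forall (fun x hx => ?_))
      (eventually_nhdsWithin_of_forall (fun x hx => ?_)) trp
    · have := hP_nonneg x hx.1.le
      have := (hE_pos x).le
      have : (0:ℝ) ≤ x ^ (mu / th) := Real.rpow_nonneg hx.1.le _
      positivity
    · have h1 : (0:ℝ) ≤ x ^ (mu / th) := Real.rpow_nonneg hx.1.le _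
      have h2 := hE_le x (Set.Ioo_subset_Icc_self hx)
      have h3 := hP_le x hx.1.le hx.2
      have h4 := hP_nonneg x hx.1.le
      have h5 := (hE_pos x).le
      calc x ^ (mu / th) * E x * P x ≤ x ^ (mu / th) * 1 * 1 := by
            apply mul_le_mul _ h3 h4 (by positivity)
            apply mul_le_mul_of_nonneg_left h2 h1
      _ = x ^ (mu / th) := by ring
  -- sequences approaching the endpoints
  set a : ℕ → ℝ := fun k => 1 / ((k : ℝ) + 2) with hadef
  set b : ℕ → ℝ := fun k => 1 - 1 / ((k : ℝ) + 2) with hbdef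
  have hball : ∀ k : ℕ, (1 : ℝ)/((k : ℝ) + 2) ≤ 1/2 := by
    intro k
    apply one_div_le_one_div_of_le (by norm_num)
    have : (0:ℝ) ≤ (k : ℝ) := Nat.cast_nonneg k
    linarith
  have hamem : ∀ k, a k ∈ Set.Ioo (0:ℝ) 1 := by
    intro k
    have h0 : (0:ℝ) < (k : ℝ) + 2 := by positivity
    constructor
    · positivity
    · have := hball k; simp only [hadef]; linarith
  have hbmem : ∀ k, b k ∈ Set.Ioo (0:ℝ) 1 := by
    intro k
    have h0 : (0:ℝ) < 1 / ((k : ℝ) + 2) := by positivity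
    have := hball k
    exact ⟨by simp only [hbdef]; linarith, by simp only [hbdef]; linarith⟩
  have hab : ∀ k, a k ≤ b k := by
    intro k
    have := hball k
    simp only [hadef, hbdef]
    linarith
  have ht : Filter.Tendsto (fun k : ℕ => (k : ℝ) + 2) Filter.atTop Filter.atTop :=
    Filter.tendsto_atTop_add_const_right _ 2 tendsto_natCast_atTop_atTop
  have ta : Filter.Tendsto a Filter.atTop (nhds 0) := by
    have := ht.inv_tendsto_atTop
    exact this.congr fun k => (one_div _).symm
  have tb : Filter.Tendsto b Filter.atTop (nhds 1) := by
    have := (tendsto_const_nhds (x := (1:ℝ)) (f := Filter.atTop (α := ℕ))).sub ta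
    simpa using this
  have taw : Filter.Tendsto a Filter.atTop (nhdsWithin 0 (Set.Ioo (0:ℝ) 1)) :=
    tendsto_nhdsWithin_of_tendsto_nhds_of_eventually_within _ ta
      (Filter.Eventually.of_forall hamem)
  have tbw : Filter.Tendsto b Filter.atTop (nhdsWithin 1 (Set.Ioo (0:ℝ) 1)) :=
    tendsto_nhdsWithin_of_tendsto_nhds_of_eventually_within _ tb
      (Filter.Eventually.of_forall hbmem)
  -- convergence of the integrals via the a.e.-cover
  have hcover : MeasureTheory.AECover
      ((MeasureTheory.volume : MeasureTheory.Measure ℝ).restrict (Set.Ioo 0 1))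
      Filter.atTop (fun k => Set.Icc (a k) (b k)) :=
    MeasureTheory.aecover_Ioo_of_Icc ta tb
  have hlim := hcover.integral_tendsto_of_countably_generated hφint
  have heq : ∀ k, (∫ x in Set.Icc (a k) (b k), φ x
      ∂((MeasureTheory.volume : MeasureTheory.Measure ℝ).restrict (Set.Ioo 0 1)))
      = Φ (b k) - Φ (a k) := by
    intro k
    have hsub : Set.Icc (a k) (b k) ⊆ Set.Ioo 0 1 := fun y hy =>
      ⟨lt_of_lt_of_le (hamem k).1 hy.1, lt_of_le_of_lt hy.2 (hbmem k).2⟩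
    rw [MeasureTheory.Measure.restrict_restrict measurableSet_Icc,
      Set.inter_eq_self_of_subset_left hsub]
    exact hFTC (a k) (b k) (hamem k) (hbmem k) (hab k)
  have hlim' : Filter.Tendsto (fun k => Φ (b k) - Φ (a k)) Filter.atTop
      (nhds (∫ x in Set.Ioo (0:ℝ) 1, φ x)) := by
    exact Filter.Tendsto.congr heq hlim
  have hlim2 : Filter.Tendsto (fun k => Φ (b k) - Φ (a k)) Filter.atTop
      (nhds (Real.exp (-(lam / th) * J 1) - 0)) :=
    (hA.comp tbw).sub (hB.comp taw)
  have hmain : (∫ x in Set.Ioo (0:ℝ) 1, φ x) = Real.exp (-(lam / th) * J 1) := by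
    have := tendsto_nhds_unique hlim' hlim2
    simpa using this
  have hinner : ∀ u ∈ Set.Ioo (0:ℝ) 1, (∫ v in u..1, Hf v) = J 1 - J u := by
    intro u hu
    have h := intervalIntegral.integral_add_adjacent_intervals
      (hJI u hu.1.le hu.2.le) (hJI2 u hu.1.le hu.2.le)
    have h2 : J u + (∫ v in u..1, Hf v) = J 1 := h
    linarith
  have hT : (∫ u in (0:ℝ)..1, u ^ (mu / th - 1) *
        Real.exp ((lam / th) * ∫ v in u..1, Hf v))
      = Real.exp ((lam / th) * J 1) * ∫ x in Set.Ioo (0:ℝ) 1, x ^ (mu / th - 1) * E x := by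
    rw [intervalIntegral.integral_of_le zero_le_one,
      MeasureTheory.integral_Ioc_eq_integral_Ioo, ← MeasureTheory.integral_const_mul]
    apply MeasureTheory.setIntegral_congr_fun measurableSet_Ioo
    intro u hu
    beta_reduce
    rw [hinner u hu, hEdef]
    rw [show (lam / th) * (J 1 - J u) = (lam / th) * J 1 + (-(lam / th) * J u) by ring,
      Real.exp_add]
    ring
  have hφsplit : (∫ x in Set.Ioo (0:ℝ) 1, φ x)
      = mu * π 0 / th * ∫ x in Set.Ioo (0:ℝ) 1, x ^ (mu / th - 1) * E x := by
    simp only [hφdef]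
    exact MeasureTheory.integral_const_mul _ _
  have hone : ((mu / th) * ∫ u in (0:ℝ)..1, u ^ (mu / th - 1) *
      Real.exp ((lam / th) * ∫ v in u..1, Hf v)) * π 0 = 1 := by
    rw [hT]
    have hW : mu * π 0 / th * (∫ x in Set.Ioo (0:ℝ) 1, x ^ (mu / th - 1) * E x)
        = Real.exp (-(lam / th) * J 1) := by rw [← hφsplit]; exact hmain
    calc ((mu / th) * (Real.exp ((lam / th) * J 1) *
          ∫ x in Set.Ioo (0:ℝ) 1, x ^ (mu / th - 1) * E x)) * π 0
        = Real.exp ((lam / th) * J 1) *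
            (mu * π 0 / th * ∫ x in Set.Ioo (0:ℝ) 1, x ^ (mu / th - 1) * E x) := by ring
    _ = Real.exp ((lam / th) * J 1) * Real.exp (-(lam / th) * J 1) := by rw [hW]
    _ = 1 := by rw [← Real.exp_add]; norm_num
  exact eq_inv_of_mul_eq_one_right hone
end

section
/- Let λ_1 > 0, θ_1 > 0 and β > 0 (in the order-book model, β = λ_0 + μ_A is the total rate of aggressive limit plus aggressive market orders), and let (h_i)_{i≥1} be nonnegative reals with Σ_{i≥1} h_i = 1. For j ≥ 1 define π_j = β Σ_{i=1}^∞ h_i Σ_{k=0}^{min(i−1,j−1)} C(i−1,k) (1/(j−1−k)!) (λ_1/θ_1)^{j−1−k} ∫_0^∞ e^{−βt} e^{−kθ_1 t} (1−e^{−θ_1 t})^{i+j−2−2k} e^{−(λ_1/θ_1)(1−e^{−θ_1 t})} dt. Then π_j ≥ 0 for all j ≥ 1 and Σ_{j=1}^∞ π_j = 1; i.e., the explicit formula of Model 1a defines a probability distribution on the positive integers. -/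
open MeasureTheory Set Filter Finset

lemma M1a.integral_exp_neg_mul_Ioi {b : ℝ} (hb : 0 < b) :
    ∫ x in Set.Ioi (0:ℝ), Real.exp (-b*x) = 1/b := by
  have hderiv : ∀ x ∈ Set.Ici (0:ℝ),
      HasDerivAt (fun x : ℝ => -(Real.exp (-b*x)/b)) (Real.exp (-b*x)) x := by
    intro x _
    have h1 : HasDerivAt (fun x : ℝ => -b*x) (-b) x := by
      simpa using (hasDerivAt_id x).const_mul (-b)
    have h2 := (h1.exp.div_const b).neg
    refine h2.congr_deriv ?_
    field_simp
  have hint : IntegrableOn (fun x : ℝ => Real.exp (-b*x)) (Set.Ioi 0) :=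
    exp_neg_integrableOn_Ioi 0 hb
  have htend : Tendsto (fun x : ℝ => -(Real.exp (-b*x)/b)) atTop (nhds 0) := by
    have : Tendsto (fun x : ℝ => Real.exp (-b*x)) atTop (nhds 0) := by
      have := Real.tendsto_exp_neg_atTop_nhds_zero.comp
        (Filter.Tendsto.const_mul_atTop hb tendsto_id)
      simpa only [Function.comp_def, neg_mul, id] using this
    simpa using (this.div_const b).neg
  have := MeasureTheory.integral_Ioi_of_hasDerivAt_of_tendsto' hderiv hint htend
  rw [show (1:ℝ)/b = 0 - -(Real.exp (-b*0)/b) by simp]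
  exact this

/-- integrand building block -/
noncomputable def M1a.g (lam1 th1 β : ℝ) (c e : ℕ) (t : ℝ) : ℝ :=
  Real.exp (-β * t) * Real.exp (-(c : ℝ) * th1 * t) *
    (1 - Real.exp (-th1 * t)) ^ e * Real.exp (-(lam1 / th1) * (1 - Real.exp (-th1 * t)))

lemma M1a.g_cont (lam1 th1 β : ℝ) (c e : ℕ) : Continuous (M1a.g lam1 th1 β c e) := by
  unfold M1a.g; fun_prop

lemma M1a.g_nonneg {lam1 th1 β : ℝ} (hth1 : 0 < th1) (c e : ℕ) {t : ℝ} (ht : 0 ≤ t) :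
    0 ≤ M1a.g lam1 th1 β c e t := by
  have h1 : Real.exp (-th1 * t) ≤ 1 := by
    rw [Real.exp_le_one_iff]
    nlinarith
  have h1' : 0 ≤ 1 - Real.exp (-th1 * t) := by linarith
  unfold M1a.g
  exact mul_nonneg (mul_nonneg (mul_nonneg (Real.exp_nonneg _) (Real.exp_nonneg _))
    (pow_nonneg h1' _)) (Real.exp_nonneg _)

lemma M1a.g_le {lam1 th1 β : ℝ} (hlam1 : 0 < lam1) (hth1 : 0 < th1) (c e : ℕ) {t : ℝ}
    (ht : 0 ≤ t) : M1a.g lam1 th1 β c e t ≤ Real.exp (-β * t) := by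
  have h1 : Real.exp (-th1 * t) ≤ 1 := by rw [Real.exp_le_one_iff]; nlinarith
  have h0 : 0 ≤ Real.exp (-th1 * t) := Real.exp_nonneg _
  have h2 : Real.exp (-(c : ℝ) * th1 * t) ≤ 1 := by
    rw [Real.exp_le_one_iff]
    have : (0:ℝ) ≤ (c:ℝ) * th1 * t := by positivity
    linarith
  have h3 : (1 - Real.exp (-th1 * t)) ^ e ≤ 1 := by
    apply pow_le_one₀ (by linarith) (by linarith)
  have h4 : Real.exp (-(lam1 / th1) * (1 - Real.exp (-th1 * t))) ≤ 1 := by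
    rw [Real.exp_le_one_iff]
    have h1' : 0 ≤ 1 - Real.exp (-th1 * t) := by linarith
    have : (0:ℝ) ≤ (lam1 / th1) * (1 - Real.exp (-th1 * t)) :=
      mul_nonneg (le_of_lt (div_pos hlam1 hth1)) h1'
    linarith
  unfold M1a.g
  calc Real.exp (-β * t) * Real.exp (-(c : ℝ) * th1 * t) * (1 - Real.exp (-th1 * t)) ^ e *
        Real.exp (-(lam1 / th1) * (1 - Real.exp (-th1 * t)))
      ≤ Real.exp (-β * t) * 1 * 1 * 1 := by
        have h1' : 0 ≤ 1 - Real.exp (-th1 * t) := by linarith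
        gcongr
    _ = Real.exp (-β * t) := by ring

lemma M1a.g_integrable {lam1 th1 β : ℝ} (hlam1 : 0 < lam1) (hth1 : 0 < th1) (hβ : 0 < β)
    (c e : ℕ) : IntegrableOn (M1a.g lam1 th1 β c e) (Set.Ioi 0) := by
  apply (exp_neg_integrableOn_Ioi 0 hβ).mono' (M1a.g_cont lam1 th1 β c e).aestronglyMeasurable
  filter_upwards [ae_restrict_mem measurableSet_Ioi] with t ht
  rw [Real.norm_eq_abs, abs_of_nonneg (M1a.g_nonneg hth1 c e (le_of_lt ht))]
  exact M1a.g_le hlam1 hth1 c e (le_of_lt ht)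

/-- the summand in `π` (with `j` shifted: this is the term for actual level `j+1`) -/
noncomputable def M1a.S (lam1 th1 β : ℝ) (m j : ℕ) (t : ℝ) : ℝ :=
  ∑ k ∈ Finset.range (min (m + 1) (j + 1)),
    (Nat.choose m k : ℝ) * (1 / (Nat.factorial (j - k) : ℝ)) * (lam1 / th1) ^ (j - k) *
      M1a.g lam1 th1 β k (m + j - 2 * k) t

lemma M1a.key {lam1 th1 β : ℝ} (hlam1 : 0 < lam1) (hth1 : 0 < th1) (m : ℕ) {t : ℝ}
    (ht : 0 < t) :
    HasSum (fun j => M1a.S lam1 th1 β m j t) (Real.exp (-β * t)) := by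
  set a : ℝ := Real.exp (-th1 * t) with ha_def
  have ha0 : 0 < a := Real.exp_pos _
  have ha1 : a < 1 := by
    rw [ha_def, Real.exp_lt_one_iff]
    nlinarith
  set y : ℝ := (lam1 / th1) * (1 - a) with hy_def
  have hy0 : 0 < y := by
    apply mul_pos (div_pos hlam1 hth1); linarith
  set G : ℕ → ℕ → ℝ := fun k j =>
    if k ≤ j then
      (Nat.choose m k : ℝ) * a ^ k * (1 - a) ^ (m - k) *
        (Real.exp (-β * t) * Real.exp (-y) * (y ^ (j - k) / (Nat.factorial (j - k) : ℝ)))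
    else 0 with hG_def
  have hSG : ∀ j, M1a.S lam1 th1 β m j t = ∑ k ∈ Finset.range (m + 1), G k j := by
    intro j
    have hrange : Finset.range (min (m + 1) (j + 1)) =
        (Finset.range (m + 1)).filter (fun k => k ≤ j) := by
      ext k; simp [Nat.lt_min, Nat.lt_succ_iff]
    rw [M1a.S, hrange, Finset.sum_filter]
    apply Finset.sum_congr rfl
    intro k hk
    rw [Finset.mem_range, Nat.lt_succ_iff] at hk
    by_cases hkj : k ≤ j
    · simp only [hG_def, hkj, if_true]
      have he1 : m + j - 2 * k = (m - k) + (j - k) := by omega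
      have hak : Real.exp (-(k : ℝ) * th1 * t) = a ^ k := by
        rw [ha_def, ← Real.exp_nat_mul]
        congr 1; ring
      have hyy : -(lam1 / th1) * (1 - Real.exp (-th1 * t)) = -y := by
        rw [hy_def]; ring
      have hyp : y ^ (j - k) = (lam1 / th1) ^ (j - k) * (1 - a) ^ (j - k) := by
        rw [hy_def, mul_pow]
      rw [M1a.g, he1, pow_add, hak, hyy, hyp, ← ha_def]
      have hfk : (0:ℝ) < (Nat.factorial (j - k) : ℝ) := by positivity
      field_simp
    · simp [hG_def, hkj]
  have hGsum : ∀ k ∈ Finset.range (m + 1), HasSum (G k)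
      ((Nat.choose m k : ℝ) * a ^ k * (1 - a) ^ (m - k) * Real.exp (-β * t)) := by
    intro k _
    have hP : HasSum (fun n : ℕ => y ^ n / (Nat.factorial n : ℝ)) (Real.exp y) := by
      have := NormedSpace.expSeries_div_hasSum_exp y
      rwa [← Real.exp_eq_exp_ℝ] at this
    have hc := hP.mul_left
      ((Nat.choose m k : ℝ) * a ^ k * (1 - a) ^ (m - k) * (Real.exp (-β * t) * Real.exp (-y)))
    have hinj : Function.Injective (fun n : ℕ => n + k) := add_left_injective k
    have hzero : ∀ x, x ∉ Set.range (fun n : ℕ => n + k) → G k x = 0 := by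
      intro x hx
      have hxk : ¬ k ≤ x := by
        intro hle
        exact hx ⟨x - k, by show x - k + k = x; omega⟩
      simp [hG_def, hxk]
    have hcomp : (fun n : ℕ => G k (n + k)) = fun n =>
        (Nat.choose m k : ℝ) * a ^ k * (1 - a) ^ (m - k) *
          (Real.exp (-β * t) * Real.exp (-y)) * (y ^ n / (Nat.factorial n : ℝ)) := by
      funext n
      have hkn : k ≤ n + k := by omega
      simp only [hG_def, hkn, if_true, Nat.add_sub_cancel]
      ring
    have hG' : HasSum (G k)
        ((Nat.choose m k : ℝ) * a ^ k * (1 - a) ^ (m - k) *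
          (Real.exp (-β * t) * Real.exp (-y)) * Real.exp y) :=
      (Function.Injective.hasSum_iff hinj hzero).mp (by
        rw [show (G k ∘ fun n => n + k) = fun n : ℕ => G k (n + k) from rfl, hcomp]
        exact hc)
    convert hG' using 1
    have hE : Real.exp (-y) * Real.exp y = 1 := by rw [← Real.exp_add]; simp
    linear_combination (-((Nat.choose m k : ℝ) * a ^ k * (1 - a) ^ (m - k) *
      Real.exp (-β * t))) * hE
  have htotal := hasSum_sum hGsum
  have hval : ∑ k ∈ Finset.range (m + 1),
      (Nat.choose m k : ℝ) * a ^ k * (1 - a) ^ (m - k) * Real.exp (-β * t)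
      = Real.exp (-β * t) := by
    rw [← Finset.sum_mul]
    have hbin : ∑ k ∈ Finset.range (m + 1),
        (Nat.choose m k : ℝ) * a ^ k * (1 - a) ^ (m - k) = 1 := by
      have hbp := add_pow a (1 - a) m
      calc ∑ k ∈ Finset.range (m + 1), (Nat.choose m k : ℝ) * a ^ k * (1 - a) ^ (m - k)
          = ∑ k ∈ Finset.range (m + 1), a ^ k * (1 - a) ^ (m - k) * (Nat.choose m k : ℝ) := by
            apply Finset.sum_congr rfl; intro k _; ring
        _ = (a + (1 - a)) ^ m := hbp.symm
        _ = 1 := by norm_num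
    rw [hbin, one_mul]
  have hfun : (fun j => M1a.S lam1 th1 β m j t)
      = fun j => ∑ k ∈ Finset.range (m + 1), G k j := funext hSG
  rw [← hval, hfun]
  exact htotal

lemma M1a.S_nonneg {lam1 th1 β : ℝ} (hlam1 : 0 < lam1) (hth1 : 0 < th1) (m j : ℕ) {t : ℝ}
    (ht : 0 ≤ t) : 0 ≤ M1a.S lam1 th1 β m j t := by
  apply Finset.sum_nonneg
  intro k _
  have := M1a.g_nonneg (lam1 := lam1) (β := β) hth1 k (m + j - 2 * k) ht
  have hc : (0:ℝ) ≤ (Nat.choose m k : ℝ) * (1 / (Nat.factorial (j - k) : ℝ)) *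
      (lam1 / th1) ^ (j - k) := by positivity
  exact mul_nonneg hc this

lemma M1a.S_cont (lam1 th1 β : ℝ) (m j : ℕ) : Continuous (fun t => M1a.S lam1 th1 β m j t) := by
  apply continuous_finset_sum
  intro k _
  exact continuous_const.mul (M1a.g_cont lam1 th1 β k (m + j - 2 * k))

lemma M1a.S_le {lam1 th1 β : ℝ} (hlam1 : 0 < lam1) (hth1 : 0 < th1) (m j : ℕ) {t : ℝ}
    (ht : 0 < t) : M1a.S lam1 th1 β m j t ≤ Real.exp (-β * t) :=
  le_hasSum (M1a.key hlam1 hth1 m ht) j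
    (fun i _ => M1a.S_nonneg hlam1 hth1 m i ht.le)

lemma M1a.S_integrableOn {lam1 th1 β : ℝ} (hlam1 : 0 < lam1) (hth1 : 0 < th1) (hβ : 0 < β)
    (m j : ℕ) : IntegrableOn (fun t => M1a.S lam1 th1 β m j t) (Set.Ioi 0) := by
  apply (exp_neg_integrableOn_Ioi 0 hβ).mono' (M1a.S_cont lam1 th1 β m j).aestronglyMeasurable
  filter_upwards [ae_restrict_mem measurableSet_Ioi] with t ht
  rw [Real.norm_eq_abs, abs_of_nonneg (M1a.S_nonneg hlam1 hth1 m j ht.le)]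
  exact M1a.S_le hlam1 hth1 m j ht

lemma M1a.claimA {lam1 th1 β : ℝ} (hlam1 : 0 < lam1) (hth1 : 0 < th1) (hβ : 0 < β) (m : ℕ) :
    ∑' j : ℕ, ENNReal.ofReal (∫ t in Set.Ioi (0:ℝ), M1a.S lam1 th1 β m j t)
      = ENNReal.ofReal (1 / β) := by
  have h1 : ∀ j : ℕ, ENNReal.ofReal (∫ t in Set.Ioi (0:ℝ), M1a.S lam1 th1 β m j t)
      = ∫⁻ t in Set.Ioi (0:ℝ), ENNReal.ofReal (M1a.S lam1 th1 β m j t) := by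
    intro j
    apply MeasureTheory.ofReal_integral_eq_lintegral_ofReal
      (M1a.S_integrableOn hlam1 hth1 hβ m j)
    filter_upwards [ae_restrict_mem measurableSet_Ioi] with t ht
    exact M1a.S_nonneg hlam1 hth1 m j ht.le
  simp_rw [h1]
  rw [← MeasureTheory.lintegral_tsum (fun j =>
    ((M1a.S_cont lam1 th1 β m j).measurable.ennreal_ofReal).aemeasurable)]
  have h2 : ∀ᵐ t ∂(volume.restrict (Set.Ioi (0:ℝ))),
      ∑' j : ℕ, ENNReal.ofReal (M1a.S lam1 th1 β m j t) = ENNReal.ofReal (Real.exp (-β * t)) := by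
    filter_upwards [ae_restrict_mem measurableSet_Ioi] with t ht
    rw [← ENNReal.ofReal_tsum_of_nonneg (fun j => M1a.S_nonneg hlam1 hth1 m j ht.le)
      (M1a.key hlam1 hth1 m ht).summable, (M1a.key hlam1 hth1 m ht).tsum_eq]
  rw [MeasureTheory.lintegral_congr_ae h2,
    ← MeasureTheory.ofReal_integral_eq_lintegral_ofReal (exp_neg_integrableOn_Ioi 0 hβ)
      (by filter_upwards with t using Real.exp_nonneg _),
    M1a.integral_exp_neg_mul_Ioi hβ]

lemma M1a.I_le {lam1 th1 β : ℝ} (hlam1 : 0 < lam1) (hth1 : 0 < th1) (hβ : 0 < β) (m j : ℕ) :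
    ∫ t in Set.Ioi (0:ℝ), M1a.S lam1 th1 β m j t ≤ 1 / β := by
  rw [← M1a.integral_exp_neg_mul_Ioi hβ]
  apply MeasureTheory.setIntegral_mono_on (M1a.S_integrableOn hlam1 hth1 hβ m j)
    (exp_neg_integrableOn_Ioi 0 hβ) measurableSet_Ioi
  intro t ht
  exact M1a.S_le hlam1 hth1 m j ht

/-- The explicit formula of Model 1a for the stationary
distribution of the volume at the best quote (unit-size limit orders at rate `λ₁`,
per-share cancellation rate `θ₁`, killing rate `β = λ₀ + μ_A`, resurrection
distribution `(h_i)_{i≥1}`) defines a probability distribution on the positive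
integers: `π_j ≥ 0` for all `j ≥ 1` and `Σ_{j≥1} π_j = 1`. -/
theorem model1a_stationary_is_probability
    (lam1 th1 β : ℝ) (hlam1 : 0 < lam1) (hth1 : 0 < th1) (hβ : 0 < β)
    (h : ℕ → ℝ) (hh0 : h 0 = 0) (hhnn : ∀ i, 0 ≤ h i) (hhsum : HasSum h 1) :
    let π : ℕ → ℝ := fun j =>
      β * ∑' m : ℕ, h (m + 1) *
        ∑ k ∈ Finset.range (min (m + 1) j),
          (Nat.choose m k : ℝ) * (1 / (Nat.factorial (j - 1 - k) : ℝ)) *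
            (lam1 / th1) ^ (j - 1 - k) *
            ∫ t in Set.Ioi (0:ℝ),
              Real.exp (-β * t) * Real.exp (-(k : ℝ) * th1 * t) *
                (1 - Real.exp (-th1 * t)) ^ (m + 1 + j - 2 - 2 * k) *
                Real.exp (-(lam1 / th1) * (1 - Real.exp (-th1 * t)))
    (∀ j : ℕ, 1 ≤ j → 0 ≤ π j) ∧ HasSum (fun j : ℕ => π (j + 1)) 1 := by
  intro π
  have hπdef : π = fun j =>
      β * ∑' m : ℕ, h (m + 1) *
        ∑ k ∈ Finset.range (min (m + 1) j),
          (Nat.choose m k : ℝ) * (1 / (Nat.factorial (j - 1 - k) : ℝ)) *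
            (lam1 / th1) ^ (j - 1 - k) *
            ∫ t in Set.Ioi (0:ℝ),
              Real.exp (-β * t) * Real.exp (-(k : ℝ) * th1 * t) *
                (1 - Real.exp (-th1 * t)) ^ (m + 1 + j - 2 - 2 * k) *
                Real.exp (-(lam1 / th1) * (1 - Real.exp (-th1 * t))) := rfl
  -- nonnegativity
  have hnonneg : ∀ j : ℕ, 1 ≤ j → 0 ≤ π j := by
    intro j _
    rw [hπdef]
    apply mul_nonneg hβ.le
    apply tsum_nonneg
    intro m
    apply mul_nonneg (hhnn _)
    apply Finset.sum_nonneg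
    intro k _
    apply mul_nonneg (by positivity)
    apply MeasureTheory.setIntegral_nonneg measurableSet_Ioi
    intro t ht
    exact M1a.g_nonneg (lam1 := lam1) (β := β) hth1 k (m + 1 + j - 2 - 2 * k) (le_of_lt ht)
  refine ⟨hnonneg, ?_⟩
  -- rewrite π (j+1) in terms of S
  have hterm : ∀ m j : ℕ,
      (∑ k ∈ Finset.range (min (m + 1) (j + 1)),
        (Nat.choose m k : ℝ) * (1 / (Nat.factorial (j + 1 - 1 - k) : ℝ)) *
          (lam1 / th1) ^ (j + 1 - 1 - k) *
          ∫ t in Set.Ioi (0:ℝ),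
            Real.exp (-β * t) * Real.exp (-(k : ℝ) * th1 * t) *
              (1 - Real.exp (-th1 * t)) ^ (m + 1 + (j + 1) - 2 - 2 * k) *
              Real.exp (-(lam1 / th1) * (1 - Real.exp (-th1 * t))))
      = ∫ t in Set.Ioi (0:ℝ), M1a.S lam1 th1 β m j t := by
    intro m j
    unfold M1a.S
    rw [MeasureTheory.integral_finset_sum _
      (fun k _ => (M1a.g_integrable hlam1 hth1 hβ k (m + j - 2 * k)).const_mul _)]
    apply Finset.sum_congr rfl
    intro k hk
    rw [MeasureTheory.integral_const_mul]
    have he : m + 1 + (j + 1) - 2 - 2 * k = m + j - 2 * k := by omega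
    rw [he]
    rfl
  have hπ2 : ∀ j : ℕ, π (j + 1)
      = β * ∑' m : ℕ, h (m + 1) * ∫ t in Set.Ioi (0:ℝ), M1a.S lam1 th1 β m j t := by
    intro j
    simp only [hπdef]
    congr 1
    apply tsum_congr
    intro m
    rw [← hterm m j]
  -- auxiliary facts
  have hInn : ∀ m j : ℕ, 0 ≤ ∫ t in Set.Ioi (0:ℝ), M1a.S lam1 th1 β m j t := by
    intro m j
    apply MeasureTheory.setIntegral_nonneg measurableSet_Ioi
    intro t ht
    exact M1a.S_nonneg hlam1 hth1 m j (le_of_lt ht)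
  have hshift : HasSum (fun m : ℕ => h (m + 1)) 1 :=
    (hasSum_nat_add_iff 1).mpr (by simpa [hh0] using hhsum)
  have hsummable_m : ∀ j : ℕ,
      Summable (fun m : ℕ => h (m + 1) * ∫ t in Set.Ioi (0:ℝ), M1a.S lam1 th1 β m j t) := by
    intro j
    apply Summable.of_nonneg_of_le
      (fun m => mul_nonneg (hhnn _) (hInn m j))
      (fun m => mul_le_mul_of_nonneg_left (M1a.I_le hlam1 hth1 hβ m j) (hhnn _))
      (hshift.summable.mul_right (1 / β))
  -- the ENNReal computation
  have key2 : ∑' j : ℕ, ENNReal.ofReal (π (j + 1)) = 1 := by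
    have e1 : ∀ j : ℕ, ENNReal.ofReal (π (j + 1)) = ENNReal.ofReal β *
        ∑' m : ℕ, ENNReal.ofReal (h (m + 1)) *
          ENNReal.ofReal (∫ t in Set.Ioi (0:ℝ), M1a.S lam1 th1 β m j t) := by
      intro j
      rw [hπ2 j, ENNReal.ofReal_mul hβ.le,
        ENNReal.ofReal_tsum_of_nonneg (fun m => mul_nonneg (hhnn _) (hInn m j))
          (hsummable_m j)]
      congr 1
      exact tsum_congr fun m => ENNReal.ofReal_mul (hhnn _)
    calc ∑' j : ℕ, ENNReal.ofReal (π (j + 1))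
        = ∑' j : ℕ, ENNReal.ofReal β * ∑' m : ℕ, ENNReal.ofReal (h (m + 1)) *
            ENNReal.ofReal (∫ t in Set.Ioi (0:ℝ), M1a.S lam1 th1 β m j t) := tsum_congr e1
      _ = ENNReal.ofReal β * ∑' j : ℕ, ∑' m : ℕ, ENNReal.ofReal (h (m + 1)) *
            ENNReal.ofReal (∫ t in Set.Ioi (0:ℝ), M1a.S lam1 th1 β m j t) :=
          ENNReal.tsum_mul_left
      _ = ENNReal.ofReal β * ∑' m : ℕ, ∑' j : ℕ, ENNReal.ofReal (h (m + 1)) *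
            ENNReal.ofReal (∫ t in Set.Ioi (0:ℝ), M1a.S lam1 th1 β m j t) := by
          rw [ENNReal.tsum_comm]
      _ = ENNReal.ofReal β * ∑' m : ℕ, ENNReal.ofReal (h (m + 1)) *
            ∑' j : ℕ, ENNReal.ofReal (∫ t in Set.Ioi (0:ℝ), M1a.S lam1 th1 β m j t) := by
          congr 1
          exact tsum_congr fun m => ENNReal.tsum_mul_left
      _ = ENNReal.ofReal β * ∑' m : ℕ, ENNReal.ofReal (h (m + 1)) * ENNReal.ofReal (1 / β) := by
          congr 1
          exact tsum_congr fun m => by rw [M1a.claimA hlam1 hth1 hβ m]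
      _ = ENNReal.ofReal β * ((∑' m : ℕ, ENNReal.ofReal (h (m + 1))) * ENNReal.ofReal (1 / β)) := by
          rw [ENNReal.tsum_mul_right]
      _ = ENNReal.ofReal β * (ENNReal.ofReal 1 * ENNReal.ofReal (1 / β)) := by
          rw [← ENNReal.ofReal_tsum_of_nonneg (fun m => hhnn _) hshift.summable, hshift.tsum_eq]
      _ = 1 := by
          rw [ENNReal.ofReal_one, one_mul, ← ENNReal.ofReal_mul hβ.le, mul_one_div,
            div_self hβ.ne', ENNReal.ofReal_one]
  have hnn1 : ∀ j : ℕ, 0 ≤ π (j + 1) := fun j => hnonneg (j + 1) (by omega)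
  have hsummable : Summable (fun j : ℕ => π (j + 1)) := by
    have := ENNReal.summable_toReal (by rw [key2]; exact ENNReal.one_ne_top)
    exact this.congr fun j => ENNReal.toReal_ofReal (hnn1 j)
  have htsum : ∑' j : ℕ, π (j + 1) = 1 := by
    calc ∑' j : ℕ, π (j + 1)
        = ∑' j : ℕ, (ENNReal.ofReal (π (j + 1))).toReal :=
          tsum_congr fun j => (ENNReal.toReal_ofReal (hnn1 j)).symm
      _ = 1 := by
          rw [← ENNReal.tsum_toReal_eq (fun _ => ENNReal.ofReal_ne_top), key2, ENNReal.toReal_one]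
  exact hsummable.hasSum_iff.mpr htsum
end
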